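/- arXiv:1701.08743 — 2 statements merged into one kernel-verified Lean document; each statement's English description precedes it below -/
import Mathlib

section
/- Let T : I → I be Borel measurable (I = [0,1]), let m be Lebesgue measure on I, let μ be a Borel probability measure on I, fix α ∈ (0,1] and a function Φ : ℕ → (0,1]. Assume that for every α-Hölder function f : I → ℝ, every bounded measurable g : I → ℝ and every n ≥ 1 one has Conv_n(f,g) ≤ ‖g‖_∞ · ‖f‖_{H(α)} · Φ(n). Then for every f ∈ BV_{1,α}, every bounded measurable g and every n ≥ 1 one has Conv_n(f,g) ≤ 6 · ‖g‖_∞ · ‖f‖_{1,α} · √(Φ(n)). -/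
open MeasureTheory Set Filter Metric
open scoped ENNReal
open scoped Topology

noncomputable section

/-- The unit interval `I = [0,1]`. -/
def II : Set ℝ := Set.Icc 0 1

/-- The essential oscillation of `h` over the `ε`-ball around `x`, intersected with `I`:
`osc(h,ε,x) = ess sup { |h(y₁) − h(y₂)| : y₁, y₂ ∈ B_ε(x) ∩ I }`,
the essential supremum being taken with respect to Lebesgue measure. -/
def osc (h : ℝ → ℝ) (ε x : ℝ) : ℝ≥0∞ :=
  essSup (fun p : ℝ × ℝ => ENNReal.ofReal |h p.1 - h p.2|)
    ((volume.restrict (Metric.ball x ε ∩ II)).prod (volume.restrict (Metric.ball x ε ∩ II)))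

/-- `osc_1(h,ε) = ∫_I osc(h,ε,x) dm(x)`. -/
def osc1 (h : ℝ → ℝ) (ε : ℝ) : ℝ≥0∞ := ∫⁻ x in II, osc h ε x

/-- `Var_{1,r}(h) = sup_{0 < ε ≤ 1} ε^{−r} osc_1(h,ε)` (cutoff `A = 1`). -/
def Var1 (r : ℝ) (h : ℝ → ℝ) : ℝ≥0∞ :=
  ⨆ ε ∈ Set.Ioc (0 : ℝ) 1, ENNReal.ofReal (ε ^ (-r)) * osc1 h ε

/-- `‖h‖_{1,r} = Var_{1,r}(h) + ‖h‖_{L¹(m)}`. -/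
def norm1r (r : ℝ) (h : ℝ → ℝ) : ℝ := (Var1 r h).toReal + ∫ x in II, |h x|

/-- `Conv_n(f,g) = | ∫_I f·(g∘Tⁿ) dm − (∫ g dμ)(∫_I f dm) |`. -/
def Conv (T : ℝ → ℝ) (μ : Measure ℝ) (n : ℕ) (f g : ℝ → ℝ) : ℝ :=
  |(∫ x in II, f x * g (T^[n] x)) - (∫ x, g x ∂μ) * ∫ x in II, f x|

namespace BVAux

lemma measII : MeasurableSet II := measurableSet_Icc

lemma vol_II : (volume : Measure ℝ) II = 1 := by
  simp [II, Real.volume_Icc]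

/-- clamp to [0,1] -/
def cl (x : ℝ) : ℝ := max 0 (min x 1)

lemma cl_mem (x : ℝ) : cl x ∈ II := by
  constructor
  · exact le_max_left _ _
  · exact max_le (by norm_num) (min_le_right _ _)

lemma cl_eq {x : ℝ} (hx : x ∈ II) : cl x = x := by
  have h1 : min x 1 = x := min_eq_left hx.2
  rw [cl, h1, max_eq_right hx.1]

lemma cl_lip (x y : ℝ) : |cl x - cl y| ≤ |x - y| := by
  have h1 : |cl x - cl y| ≤ |min x 1 - min y 1| := by
    rw [cl, cl, max_comm 0 (min x 1), max_comm 0 (min y 1)]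
    exact abs_max_sub_max_le_abs _ _ _
  refine h1.trans ?_
  have := abs_min_sub_min_le_max x 1 y 1
  simpa using this

def aa (ε x : ℝ) : ℝ := max (x - ε) 0
def bb (ε x : ℝ) : ℝ := min (x + ε) 1
def LL (ε x : ℝ) : ℝ := bb ε x - aa ε x

lemma aa_lip (ε x y : ℝ) : |aa ε x - aa ε y| ≤ |x - y| := by
  have := abs_max_sub_max_le_abs (x - ε) (y - ε) 0
  simpa [aa] using this

lemma bb_lip (ε x y : ℝ) : |bb ε x - bb ε y| ≤ |x - y| := by
  have := abs_min_sub_min_le_max (x + ε) 1 (y + ε) 1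
  simpa [bb] using this

lemma LL_ge {ε x : ℝ} (hε : 0 < ε) (hε1 : ε ≤ 1) (hx : x ∈ II) : ε ≤ LL ε x := by
  obtain ⟨hx0, hx1⟩ := hx
  rw [LL, aa, bb]
  rcases le_total (x + ε) 1 with h | h
  · rw [min_eq_left h]
    have : max (x - ε) 0 ≤ x := max_le (by linarith) hx0
    linarith
  · rw [min_eq_right h]
    have : max (x - ε) 0 ≤ 1 - ε := max_le (by linarith) (by linarith)
    linarith

lemma aa_le_bb {ε x : ℝ} (hε : 0 < ε) (hε1 : ε ≤ 1) (hx : x ∈ II) : aa ε x ≤ bb ε x := by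
  have := LL_ge hε hε1 hx
  rw [LL] at this; linarith

lemma Ioo_sub_II (ε x : ℝ) : Ioo (aa ε x) (bb ε x) ⊆ II := by
  intro y hy
  exact ⟨le_of_lt (lt_of_le_of_lt (le_max_right _ _) hy.1),
    le_of_lt (lt_of_lt_of_le hy.2 (min_le_right _ _))⟩

lemma Ioo_sub_ball (ε x : ℝ) : Ioo (aa ε x) (bb ε x) ⊆ ball x ε ∩ II := by
  intro y hy
  refine ⟨?_, Ioo_sub_II ε x hy⟩
  have h1 : x - ε < y := lt_of_le_of_lt (le_max_left _ _) hy.1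
  have h2 : y < x + ε := lt_of_lt_of_le hy.2 (min_le_left _ _)
  rw [mem_ball, Real.dist_eq, abs_lt]
  constructor <;> linarith

lemma vol_Ioo (ε x : ℝ) : volume (Ioo (aa ε x) (bb ε x)) = ENNReal.ofReal (LL ε x) := by
  rw [Real.volume_Ioo, LL]

/-- average of a.e.-close function is close -/
lemma avg_close {f : ℝ → ℝ} {s : Set ℝ}
    (h0 : volume s ≠ 0) (htop : volume s ≠ ⊤)
    (hint : IntegrableOn f s) {w D : ℝ}
    (hae : ∀ᵐ z ∂(volume.restrict s), |f z - w| ≤ D) :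
    |(∫ z in s, f z) / (volume s).toReal - w| ≤ D := by
  set T := (volume s).toReal with hT
  have hTpos : 0 < T := ENNReal.toReal_pos h0 htop
  haveI : IsFiniteMeasure (volume.restrict s) :=
    ⟨by rwa [Measure.restrict_apply_univ, lt_top_iff_ne_top]⟩
  have hsub : ∫ z in s, (f z - w) = (∫ z in s, f z) - T * w := by
    rw [integral_sub hint (integrable_const _), setIntegral_const, smul_eq_mul]; rfl
  have habs : |∫ z in s, (f z - w)| ≤ D * T := by
    calc |∫ z in s, (f z - w)| ≤ ∫ z in s, |f z - w| := by
          simpa using norm_integral_le_integral_norm (fun z => f z - w) (μ := volume.restrict s)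
      _ ≤ ∫ _z in s, D := by
          refine integral_mono_ae (hint.sub (integrable_const _)).abs (integrable_const _) hae
      _ = D * T := by rw [setIntegral_const, smul_eq_mul, mul_comm]; rfl
  rw [hsub] at habs
  have heq : (∫ z in s, f z) / T - w = ((∫ z in s, f z) - T * w) / T := by
    field_simp
  rw [heq, abs_div, abs_of_pos hTpos, div_le_iff₀ hTpos]
  calc |(∫ z in s, f z) - T * w| ≤ D * T := habs
    _ = D * T := rfl

lemma interval_bd {h : ℝ → ℝ} {M : ℝ} (hi : Integrable h volume)
    (hb : ∀ᵐ x : ℝ, |h x| ≤ M) (p q : ℝ) :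
    |∫ t in p..q, h t| ≤ M * |q - p| := by
  have key : ∀ p q : ℝ, p ≤ q → |∫ t in p..q, h t| ≤ M * |q - p| := by
    intro p q hpq
    rw [intervalIntegral.integral_of_le hpq]
    have h1 : |∫ t in Ioc p q, h t| ≤ ∫ t in Ioc p q, |h t| := by
      simpa using norm_integral_le_integral_norm h (μ := volume.restrict (Ioc p q))
    have h2 : ∫ t in Ioc p q, |h t| ≤ ∫ _t in Ioc p q, M :=
      integral_mono_ae hi.integrableOn.abs (integrable_const _) (ae_restrict_of_ae hb)
    have h3 : ∫ _t in Ioc p q, M = M * (q - p) := by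
      rw [setIntegral_const, smul_eq_mul, measureReal_def, Real.volume_Ioc, ENNReal.toReal_ofReal (by linarith),
        mul_comm]
    rw [abs_of_nonneg (by linarith : (0:ℝ) ≤ q - p)]
    linarith
  rcases le_total p q with hpq | hpq
  · exact key p q hpq
  · rw [intervalIntegral.integral_symm, abs_neg, abs_sub_comm]
    exact key q p hpq



lemma Mnn {h : ℝ → ℝ} {M : ℝ} (hb : ∀ᵐ x : ℝ, |h x| ≤ M) : 0 ≤ M := by
  obtain ⟨x, hx⟩ := hb.exists
  exact (abs_nonneg _).trans hx

lemma G_interval {h : ℝ → ℝ} {ε : ℝ} (hε : 0 < ε) (hε1 : ε ≤ 1) {u : ℝ} (hu : u ∈ II) :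
    ∫ y in Ioo (aa ε u) (bb ε u), h y = ∫ t in (aa ε u)..(bb ε u), h t := by
  rw [intervalIntegral.integral_of_le (aa_le_bb hε hε1 hu), integral_Ioc_eq_integral_Ioo]

lemma G_bd {h : ℝ → ℝ} {M ε : ℝ} (hi : Integrable h volume)
    (hb : ∀ᵐ x : ℝ, |h x| ≤ M) (hε : 0 < ε) (hε1 : ε ≤ 1) {u : ℝ} (hu : u ∈ II) :
    |∫ y in Ioo (aa ε u) (bb ε u), h y| ≤ M * LL ε u := by
  rw [G_interval hε hε1 hu]
  have hab := aa_le_bb hε hε1 hu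
  have h := interval_bd hi hb (aa ε u) (bb ε u)
  rw [abs_of_nonneg (by linarith : (0:ℝ) ≤ bb ε u - aa ε u)] at h
  simpa only [LL] using h

lemma fav_bd {h : ℝ → ℝ} {M ε : ℝ} (hi : Integrable h volume)
    (hb : ∀ᵐ x : ℝ, |h x| ≤ M) (hε : 0 < ε) (hε1 : ε ≤ 1) {u : ℝ} (hu : u ∈ II) :
    |(∫ y in Ioo (aa ε u) (bb ε u), h y) / LL ε u| ≤ M := by
  have hL : 0 < LL ε u := lt_of_lt_of_le hε (LL_ge hε hε1 hu)
  rw [abs_div, abs_of_pos hL, div_le_iff₀ hL]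
  exact G_bd hi hb hε hε1 hu

lemma G_lip {h : ℝ → ℝ} {M ε : ℝ} (hi : Integrable h volume)
    (hb : ∀ᵐ x : ℝ, |h x| ≤ M) (hε : 0 < ε) (hε1 : ε ≤ 1)
    {u v : ℝ} (hu : u ∈ II) (hv : v ∈ II) :
    |(∫ y in Ioo (aa ε u) (bb ε u), h y) - ∫ y in Ioo (aa ε v) (bb ε v), h y|
      ≤ 2 * M * |u - v| := by
  rw [G_interval hε hε1 hu, G_interval hε hε1 hv]
  have hii : ∀ p q : ℝ, IntervalIntegrable h volume p q := fun p q => hi.intervalIntegrable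
  have I1 : (∫ t in (aa ε u)..(aa ε v), h t) + ∫ t in (aa ε v)..(bb ε v), h t
      = ∫ t in (aa ε u)..(bb ε v), h t :=
    intervalIntegral.integral_add_adjacent_intervals (hii _ _) (hii _ _)
  have I2 : (∫ t in (aa ε u)..(bb ε v), h t) + ∫ t in (bb ε v)..(bb ε u), h t
      = ∫ t in (aa ε u)..(bb ε u), h t :=
    intervalIntegral.integral_add_adjacent_intervals (hii _ _) (hii _ _)
  have e1 : (∫ t in (aa ε u)..(bb ε u), h t) - ∫ t in (aa ε v)..(bb ε v), h t
      = (∫ t in (aa ε u)..(aa ε v), h t) + ∫ t in (bb ε v)..(bb ε u), h t := by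
    linarith
  rw [e1]
  have b1 := interval_bd hi hb (aa ε u) (aa ε v)
  have b2 := interval_bd hi hb (bb ε v) (bb ε u)
  have l1 : |aa ε v - aa ε u| ≤ |u - v| := by
    rw [abs_sub_comm]; exact aa_lip ε u v
  have l2 : |bb ε u - bb ε v| ≤ |u - v| := bb_lip ε u v
  have hM : 0 ≤ M := Mnn hb
  calc |(∫ t in (aa ε u)..(aa ε v), h t) + ∫ t in (bb ε v)..(bb ε u), h t|
      ≤ |∫ t in (aa ε u)..(aa ε v), h t| + |∫ t in (bb ε v)..(bb ε u), h t| := abs_add_le _ _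
    _ ≤ M * |u - v| + M * |u - v| := by
        refine add_le_add (b1.trans ?_) (b2.trans ?_)
        · exact mul_le_mul_of_nonneg_left l1 hM
        · exact mul_le_mul_of_nonneg_left l2 hM
    _ = 2 * M * |u - v| := by ring

lemma LL_lip (ε u v : ℝ) : |LL ε u - LL ε v| ≤ 2 * |u - v| := by
  have h1 := bb_lip ε u v
  have h2 : |aa ε v - aa ε u| ≤ |u - v| := by rw [abs_sub_comm]; exact aa_lip ε u v
  have : LL ε u - LL ε v = (bb ε u - bb ε v) + (aa ε v - aa ε u) := by rw [LL, LL]; ring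
  rw [this]
  calc |(bb ε u - bb ε v) + (aa ε v - aa ε u)| ≤ _ + _ := abs_add_le _ _
    _ ≤ 2 * |u - v| := by linarith

lemma fav_lip {h : ℝ → ℝ} {M ε : ℝ} (hi : Integrable h volume)
    (hb : ∀ᵐ x : ℝ, |h x| ≤ M) (hε : 0 < ε) (hε1 : ε ≤ 1)
    {u v : ℝ} (hu : u ∈ II) (hv : v ∈ II) :
    |(∫ y in Ioo (aa ε u) (bb ε u), h y) / LL ε u
      - (∫ y in Ioo (aa ε v) (bb ε v), h y) / LL ε v| ≤ 4 * M / ε * |u - v| := by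
  set A := ∫ y in Ioo (aa ε u) (bb ε u), h y with hA
  set B := ∫ y in Ioo (aa ε v) (bb ε v), h y with hB
  set Lu := LL ε u with hLu
  set Lv := LL ε v with hLv
  have hLu' : ε ≤ Lu := LL_ge hε hε1 hu
  have hLv' : ε ≤ Lv := LL_ge hε hε1 hv
  have hLu0 : 0 < Lu := lt_of_lt_of_le hε hLu'
  have hLv0 : 0 < Lv := lt_of_lt_of_le hε hLv'
  have hM : 0 ≤ M := Mnn hb
  have hAB : |A - B| ≤ 2 * M * |u - v| := G_lip hi hb hε hε1 hu hv
  have hBbd : |B| ≤ M * Lv := G_bd hi hb hε hε1 hv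
  have hLL : |Lv - Lu| ≤ 2 * |u - v| := by rw [abs_sub_comm]; exact LL_lip ε u v
  have key : A / Lu - B / Lv = ((A - B) * Lv + B * (Lv - Lu)) / (Lu * Lv) := by
    field_simp
    ring
  rw [key, abs_div, abs_of_pos (mul_pos hLu0 hLv0), div_le_iff₀ (mul_pos hLu0 hLv0)]
  have hnum : |(A - B) * Lv + B * (Lv - Lu)| ≤ 4 * M * |u - v| * Lv := by
    calc |(A - B) * Lv + B * (Lv - Lu)| ≤ |(A - B) * Lv| + |B * (Lv - Lu)| := abs_add_le _ _
      _ = |A - B| * Lv + |B| * |Lv - Lu| := by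
          rw [abs_mul, abs_mul, abs_of_pos hLv0]
      _ ≤ (2 * M * |u - v|) * Lv + (M * Lv) * (2 * |u - v|) := by
          refine add_le_add (mul_le_mul_of_nonneg_right hAB hLv0.le) ?_
          exact mul_le_mul hBbd hLL (abs_nonneg _) (by positivity)
      _ = 4 * M * |u - v| * Lv := by ring
  refine hnum.trans ?_
  have h3 : (4 * M / ε * |u - v|) * (ε * Lv) = 4 * M * |u - v| * Lv := by
    field_simp
  rw [← h3]
  have h4 : ε * Lv ≤ Lu * Lv := mul_le_mul_of_nonneg_right hLu' hLv0.le
  exact mul_le_mul_of_nonneg_left h4 (by positivity)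

lemma hoelder_conv {α M ε : ℝ} (hα0 : 0 < α) (hα1 : α ≤ 1) (hM : 0 ≤ M) (hε : 0 < ε)
    {A d t : ℝ} (hd0 : 0 ≤ d) (hdt : d ≤ t) (h1 : A ≤ 4 * M / ε * d) (h2 : A ≤ 2 * M) :
    A ≤ 4 * M / ε ^ α * t ^ α := by
  have ht0 : 0 ≤ t := hd0.trans hdt
  have hda : d ^ α ≤ t ^ α := Real.rpow_le_rpow hd0 hdt hα0.le
  have hcoef : 0 ≤ 4 * M / ε ^ α := by positivity
  have main : A ≤ 4 * M / ε ^ α * d ^ α := by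
    rcases le_or_gt d ε with hcase | hcase
    · rcases eq_or_lt_of_le hd0 with h0 | h0
      · have hA0 : A ≤ 0 := by
          have := h1; rw [← h0] at this; simpa using this
        exact hA0.trans (by positivity)
      · set q := d / ε with hq
        have hq0 : 0 < q := div_pos h0 hε
        have hq1 : q ≤ 1 := (div_le_one hε).mpr hcase
        have hqα : q ≤ q ^ α := by
          calc q = q ^ (1:ℝ) := (Real.rpow_one q).symm
            _ ≤ q ^ α := Real.rpow_le_rpow_of_exponent_ge hq0 hq1 hα1
        have hd : d = q * ε := by rw [hq, div_mul_cancel₀ _ hε.ne']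
        have hdα : d ^ α = q ^ α * ε ^ α := by
          rw [hd, Real.mul_rpow hq0.le hε.le]
        calc A ≤ 4 * M / ε * d := h1
          _ = 4 * M * q := by rw [hd]; field_simp
          _ ≤ 4 * M * q ^ α := by nlinarith
          _ = 4 * M / ε ^ α * d ^ α := by
              rw [hdα]
              have hεα : (0:ℝ) < ε ^ α := Real.rpow_pos_of_pos hε α
              field_simp
    · have hq1 : 1 ≤ d / ε := (le_div_iff₀ hε).mpr (by linarith)
      have hqα : 1 ≤ (d / ε) ^ α := Real.one_le_rpow hq1 hα0.le
      have hdiv : (d / ε) ^ α = d ^ α / ε ^ α := Real.div_rpow hd0 hε.le α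
      calc A ≤ 2 * M := h2
        _ ≤ 4 * M * ((d / ε) ^ α) := by nlinarith
        _ = 4 * M / ε ^ α * d ^ α := by rw [hdiv]; ring
  refine main.trans ?_
  exact mul_le_mul_of_nonneg_left hda hcoef





lemma ae_notmem01 : ∀ᵐ y : ℝ, y ∉ ({0, 1} : Set ℝ) := by
  have h : volume ({0, 1} : Set ℝ) = 0 :=
    Set.Finite.measure_zero (Set.toFinite _) volume
  exact (measure_eq_zero_iff_ae_notMem (μ := volume)).mp h

lemma ball_one_eq {x : ℝ} (hx : x ∈ II) :
    volume.restrict (ball x 1 ∩ II) = volume.restrict II := by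
  refine Measure.restrict_congr_set ?_
  rw [eventuallyEq_set]
  filter_upwards [ae_notmem01] with y hy
  constructor
  · exact fun h => h.2
  · intro hyII
    refine ⟨?_, hyII⟩
    have hy0 : y ≠ 0 := fun h => hy (by simp [h])
    have hy1 : y ≠ 1 := fun h => hy (by simp [h])
    have h0 : 0 < y := lt_of_le_of_ne hyII.1 (Ne.symm hy0)
    have h1 : y < 1 := lt_of_le_of_ne hyII.2 hy1
    rw [mem_ball, Real.dist_eq, abs_lt]
    obtain ⟨hx0, hx1⟩ := hx
    constructor <;> linarith

lemma O_le_Var (f : ℝ → ℝ) {α : ℝ} (hα0 : 0 < α) (hα1 : α ≤ 1) :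
    essSup (fun p : ℝ × ℝ => ENNReal.ofReal |f p.1 - f p.2|)
      ((volume.restrict II).prod (volume.restrict II)) ≤ Var1 α f := by
  set O := essSup (fun p : ℝ × ℝ => ENNReal.ofReal |f p.1 - f p.2|)
      ((volume.restrict II).prod (volume.restrict II)) with hO
  have hosc : ∀ x ∈ II, osc f 1 x = O := by
    intro x hx
    rw [osc, ball_one_eq hx]
  have h1 : osc1 f 1 = O := by
    rw [osc1, setLIntegral_congr_fun measII hosc, setLIntegral_const,
      vol_II, mul_one]
  have h2 : ENNReal.ofReal ((1:ℝ) ^ (-α)) * osc1 f 1 ≤ Var1 α f :=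
    le_iSup₂ (f := fun ε (_ : ε ∈ Set.Ioc (0:ℝ) 1) => ENNReal.ofReal (ε ^ (-α)) * osc1 f ε)
      1 ⟨zero_lt_one, le_refl 1⟩
  rwa [Real.one_rpow, ENNReal.ofReal_one, one_mul, h1] at h2

lemma osc1_le_Var (f : ℝ → ℝ) {α ε : ℝ} (hε : 0 < ε) (hε1 : ε ≤ 1) :
    osc1 f ε ≤ ENNReal.ofReal (ε ^ α) * Var1 α f := by
  have h2 : ENNReal.ofReal (ε ^ (-α)) * osc1 f ε ≤ Var1 α f :=
    le_iSup₂ (f := fun ε (_ : ε ∈ Set.Ioc (0:ℝ) 1) => ENNReal.ofReal (ε ^ (-α)) * osc1 f ε)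
      ε ⟨hε, hε1⟩
  have h3 := mul_le_mul_right h2 (ENNReal.ofReal (ε ^ α))
  rwa [← mul_assoc, ← ENNReal.ofReal_mul (Real.rpow_nonneg hε.le α),
    ← Real.rpow_add hε, add_neg_cancel, Real.rpow_zero, ENNReal.ofReal_one, one_mul] at h3

lemma key_ae {f : ℝ → ℝ} (hfi : Integrable (II.indicator f) volume)
    {ε : ℝ} (hε : 0 < ε) (hε1 : ε ≤ 1)
    (F : ℝ → ℝ) (hF : ∀ x ∈ II, F x = (∫ y in Ioo (aa ε x) (bb ε x), f y) / LL ε x) :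
    ∀ᵐ x ∂(volume.restrict II), ENNReal.ofReal |f x - F x| ≤ osc f ε x := by
  have hLDT := IsUnifLocDoublingMeasure.ae_tendsto_average (μ := (volume : Measure ℝ))
    hfi.locallyIntegrable 1
  have hfintII : IntegrableOn f II volume := (integrable_indicator_iff measII).mp hfi
  filter_upwards [ae_restrict_of_ae hLDT, ae_restrict_of_ae ae_notmem01,
    ae_restrict_mem measII] with x hx hx01 hxII
  by_cases hosc : osc f ε x = ⊤
  · rw [hosc]; exact le_top
  set D := (osc f ε x).toReal with hD
  have hgoal : |f x - F x| ≤ D → ENNReal.ofReal |f x - F x| ≤ osc f ε x := by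
    intro h
    exact (ENNReal.ofReal_le_ofReal h).trans (le_of_eq (ENNReal.ofReal_toReal hosc))
  refine hgoal ?_
  have hx0 : 0 < x :=
    lt_of_le_of_ne hxII.1 (Ne.symm fun h => hx01 (by simp [← h]))
  have hx1 : x < 1 := lt_of_le_of_ne hxII.2 (fun h => hx01 (by simp [h]))
  -- pair bound
  have hpair := ENNReal.ae_le_essSup (f := fun p : ℝ × ℝ => ENNReal.ofReal |f p.1 - f p.2|)
    (μ := (volume.restrict (ball x ε ∩ II)).prod (volume.restrict (ball x ε ∩ II)))
  have hpair' : ∀ᵐ p ∂((volume.restrict (ball x ε ∩ II)).prod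
      (volume.restrict (ball x ε ∩ II))), |f p.1 - f p.2| ≤ D := by
    refine hpair.mono fun p hp => ?_
    have h2 := ENNReal.toReal_mono hosc hp
    rwa [ENNReal.toReal_ofReal (abs_nonneg _)] at h2
  have hFub := Measure.ae_ae_of_ae_prod hpair'
  -- facts about J
  set J := Ioo (aa ε x) (bb ε x) with hJ
  have hJsub : J ⊆ ball x ε ∩ II := Ioo_sub_ball ε x
  have hLpos : 0 < LL ε x := lt_of_lt_of_le hε (LL_ge hε hε1 hxII)
  have hvolJ : volume J = ENNReal.ofReal (LL ε x) := vol_Ioo ε x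
  have hJ0 : volume J ≠ 0 := by
    rw [hvolJ]; simp [ENNReal.ofReal_eq_zero, not_le, hLpos]
  have hJtop : volume J ≠ ⊤ := by rw [hvolJ]; exact ENNReal.ofReal_ne_top
  have hFx : F x = (∫ y in J, f y) / (volume J).toReal := by
    rw [hF x hxII, hvolJ, ENNReal.toReal_ofReal hLpos.le]
  -- a.e. y in ball∩II : |f y - F x| ≤ D
  have hyz : ∀ᵐ y ∂volume.restrict (ball x ε ∩ II), |f y - F x| ≤ D := by
    refine hFub.mono fun y hy => ?_
    have hyJ : ∀ᵐ z ∂volume.restrict J, |f y - f z| ≤ D :=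
      ae_mono (Measure.restrict_mono hJsub le_rfl) hy
    have h3 := avg_close hJ0 hJtop (hfintII.mono_set (hJsub.trans inter_subset_right))
      (w := f y) (hyJ.mono fun z hz => by rwa [abs_sub_comm])
    rw [← hFx] at h3
    rwa [abs_sub_comm]
  -- closed balls
  set r₀ := min ε (min x (1 - x)) with hr₀def
  have hr₀ : 0 < r₀ := lt_min hε (lt_min hx0 (by linarith))
  have hball : ∀ r ∈ Ioo (0:ℝ) r₀, closedBall x r ⊆ ball x ε ∩ II := by
    intro r hr z hz
    rw [mem_closedBall, Real.dist_eq, abs_le] at hz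
    have hrε : r < ε := lt_of_lt_of_le hr.2 (min_le_left _ _)
    have hrx : r < x := lt_of_lt_of_le hr.2 ((min_le_right _ _).trans (min_le_left _ _))
    have hrx1 : r < 1 - x := lt_of_lt_of_le hr.2 ((min_le_right _ _).trans (min_le_right _ _))
    constructor
    · rw [mem_ball, Real.dist_eq, abs_lt]; constructor <;> linarith [hz.1, hz.2]
    · constructor <;> linarith [hz.1, hz.2]
  have hbd_r : ∀ r ∈ Ioo (0:ℝ) r₀, |(⨍ y in closedBall x r, II.indicator f y) - F x| ≤ D := by
    intro r hr
    have hsub := hball r hr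
    have hvol0 : volume (closedBall x r) ≠ 0 := (measure_closedBall_pos volume x hr.1).ne'
    have hvoltop : volume (closedBall x r) ≠ ⊤ := measure_closedBall_lt_top.ne
    have hcongr : ∫ y in closedBall x r, II.indicator f y = ∫ y in closedBall x r, f y :=
      setIntegral_congr_fun measurableSet_closedBall
        (fun y hy => Set.indicator_of_mem ((hsub hy).2) f)
    rw [setAverage_eq, smul_eq_mul, hcongr, ← div_eq_inv_mul]
    exact avg_close hvol0 hvoltop (hfintII.mono_set (hsub.trans inter_subset_right))
      (ae_mono (Measure.restrict_mono hsub le_rfl) hyz)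
  have htend : Tendsto (fun r => ⨍ y in closedBall x r, II.indicator f y) (𝓝[>] 0)
      (𝓝 (f x)) := by
    have h4 := hx (fun _ : ℝ => x) (fun r : ℝ => r) tendsto_id ?_
    · simpa [Set.indicator_of_mem hxII] using h4
    · filter_upwards [self_mem_nhdsWithin] with r hr
      exact mem_closedBall_self (by simpa using (le_of_lt (mem_Ioi.mp hr)))
  have habs : Tendsto (fun r => |(⨍ y in closedBall x r, II.indicator f y) - F x|) (𝓝[>] 0)
      (𝓝 (|f x - F x|)) := (htend.sub tendsto_const_nhds).abs
  refine le_of_tendsto habs ?_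
  filter_upwards [Ioo_mem_nhdsGT_of_mem (Set.left_mem_Ico.mpr hr₀)] with r hr
  exact hbd_r r hr


end BVAux

set_option maxHeartbeats 2000000

/-- If convergence to equilibrium holds with speed `Φ` for `α`-Hölder `f` against bounded
measurable `g`, then for `f ∈ BV_{1,α}` and bounded measurable `g`, for all `n ≥ 1`,
`Conv_n(f,g) ≤ 6 ‖g‖_∞ ‖f‖_{1,α} √(Φ(n))`. -/
theorem holder_to_bounded_variation_convergence
    (T : ℝ → ℝ) (hT : Measurable T) (hTI : Set.MapsTo T II II)
    (μ : Measure ℝ) [IsProbabilityMeasure μ] (hμI : μ II = 1)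
    (α : ℝ) (hα : α ∈ Set.Ioc (0 : ℝ) 1)
    (Φ : ℕ → ℝ) (hΦ : ∀ n, Φ n ∈ Set.Ioc (0 : ℝ) 1)
    (hyp : ∀ (f g : ℝ → ℝ) (Hf Kf Kg : ℝ),
      (∀ x y, |f x - f y| ≤ Hf * |x - y| ^ α) →
      (∀ x, |f x| ≤ Kf) →
      Measurable g → (∀ x, |g x| ≤ Kg) →
      ∀ n : ℕ, 1 ≤ n → Conv T μ n f g ≤ Kg * (Kf + Hf) * Φ n) :
    ∀ (f g : ℝ → ℝ) (Kg : ℝ),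
      Measurable f → Var1 α f < ⊤ →
      Measurable g → (∀ x, |g x| ≤ Kg) →
      ∀ n : ℕ, 1 ≤ n →
        Conv T μ n f g ≤ 6 * Kg * norm1r α f * Real.sqrt (Φ n) := by
  intro f g Kg hf hVar hg hgK n hn
  obtain ⟨hα0, hα1⟩ := hα
  obtain ⟨hΦ0, hΦ1⟩ := hΦ n
  have hKg0 : 0 ≤ Kg := (abs_nonneg _).trans (hgK 0)
  -- the restricted measure is a probability measure
  have hm1 : (volume.restrict II) univ = 1 := by
    rw [Measure.restrict_apply_univ, BVAux.vol_II]
  haveI hfinII : IsFiniteMeasure (volume.restrict II) :=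
    ⟨by rw [hm1]; exact ENNReal.one_lt_top⟩
  haveI : (ae (volume.restrict II)).NeBot := ae_neBot.mpr (by
    intro h0; rw [h0] at hm1; simp at hm1)
  -- variation quantities
  set V : ℝ := (Var1 α f).toReal with hV
  have hV0 : 0 ≤ V := ENNReal.toReal_nonneg
  set O := essSup (fun p : ℝ × ℝ => ENNReal.ofReal |f p.1 - f p.2|)
      ((volume.restrict II).prod (volume.restrict II)) with hOdef
  have hO_le : O ≤ Var1 α f := BVAux.O_le_Var f hα0 hα1
  have hOtop : O ≠ ⊤ := (lt_of_le_of_lt hO_le hVar).ne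
  set O' := O.toReal with hO'
  have hO'V : O' ≤ V := ENNReal.toReal_mono hVar.ne hO_le
  have hO'0 : 0 ≤ O' := ENNReal.toReal_nonneg
  have hpair : ∀ᵐ p ∂((volume.restrict II).prod (volume.restrict II)),
      |f p.1 - f p.2| ≤ O' := by
    refine (ENNReal.ae_le_essSup
      (fun p : ℝ × ℝ => ENNReal.ofReal |f p.1 - f p.2|)).mono fun p hp => ?_
    have h2 := ENNReal.toReal_mono hOtop hp
    rwa [ENNReal.toReal_ofReal (abs_nonneg _)] at h2
  have hFub : ∀ᵐ y ∂(volume.restrict II), ∀ᵐ z ∂(volume.restrict II),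
      |f y - f z| ≤ O' := Measure.ae_ae_of_ae_prod hpair
  -- integrability of f on II
  obtain ⟨y₀, hy₀⟩ := hFub.exists
  have hfbd0 : ∀ᵐ z ∂(volume.restrict II), |f z| ≤ |f y₀| + O' := by
    refine hy₀.mono fun z hz => ?_
    have h3 : |f z| - |f y₀| ≤ |f z - f y₀| := abs_sub_abs_le_abs_sub _ _
    rw [abs_sub_comm] at h3
    linarith only [h3, hz]
  have hfint : IntegrableOn f II volume :=
    Integrable.mono' (integrable_const (|f y₀| + O')) hf.aestronglyMeasurable
      (hfbd0.mono fun z hz => by rwa [Real.norm_eq_abs])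
  set Ia : ℝ := ∫ x in II, |f x| with hIa
  have hIa0 : 0 ≤ Ia := integral_nonneg fun x => abs_nonneg _
  set N : ℝ := norm1r α f with hN
  have hNval : N = V + Ia := rfl
  have hVN : V ≤ N := by rw [hNval]; linarith only [hIa0]
  have hN0 : 0 ≤ N := by rw [hNval]; linarith only [hV0, hIa0]
  have hfN : ∀ᵐ x ∂(volume.restrict II), |f x| ≤ N := by
    refine hFub.mono fun x hx => ?_
    have h1 : ∀ᵐ z ∂(volume.restrict II), |f x| - O' ≤ |f z| := by
      refine hx.mono fun z hz => ?_
      have h3 : |f x| - |f z| ≤ |f x - f z| := abs_sub_abs_le_abs_sub _ _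
      linarith only [h3, hz]
    have h2 : |f x| - O' ≤ Ia := by
      have h3 : ∫ _z in II, (|f x| - O') ≤ ∫ z in II, |f z| :=
        integral_mono_ae (integrable_const _) hfint.abs h1
      rwa [setIntegral_const, measureReal_def, BVAux.vol_II, ENNReal.toReal_one, one_smul] at h3
    rw [hNval]; linarith only [h2, hO'V]
  -- centering constant
  set S : Set ℝ := {t | ∀ᵐ x ∂(volume.restrict II), f x ≤ t} with hSdef
  have hNS : N ∈ S := hfN.mono fun x hx => (le_abs_self _).trans hx
  have hSne : S.Nonempty := ⟨N, hNS⟩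
  have hSbdd : BddBelow S := by
    refine ⟨-N, fun t ht => ?_⟩
    obtain ⟨x, hx1, hx2⟩ := (hfN.and ht).exists
    have h4 := neg_abs_le (f x)
    linarith only [h4, hx1, hx2]
  set σ := sInf S with hσ
  have h1 : ∀ᵐ x ∂(volume.restrict II), f x ≤ σ := by
    have hall : ∀ k : ℕ, ∀ᵐ x ∂(volume.restrict II), f x ≤ σ + 1/(k+1) := by
      intro k
      have hpos : (0:ℝ) < 1/((k:ℝ)+1) := by positivity
      obtain ⟨t, htS, htlt⟩ := exists_lt_of_csInf_lt hSne
        (by linarith only [hpos] : σ < σ + 1/((k:ℝ)+1))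
      have htS' : ∀ᵐ x ∂(volume.restrict II), f x ≤ t := htS
      exact htS'.mono fun x hx => hx.trans htlt.le
    refine (ae_all_iff.mpr hall).mono fun x hx => ?_
    by_contra hgt
    push_neg at hgt
    obtain ⟨k, hk⟩ := exists_nat_one_div_lt (sub_pos.mpr hgt)
    have h5 := hx k
    linarith only [h5, hk]
  have h2 : ∀ᵐ x ∂(volume.restrict II), σ - O' ≤ f x := by
    refine hFub.mono fun y hy => ?_
    have hmem : (f y + O') ∈ S := hy.mono fun z hz => by
      have h6 := (abs_le.mp hz).1
      linarith only [h6]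
    have h7 : σ ≤ f y + O' := csInf_le hSbdd hmem
    linarith only [h7]
  set c := σ - O'/2 with hcdef
  set M : ℝ := O'/2 with hM
  have hM0 : 0 ≤ M := by rw [hM]; linarith only [hO'0]
  have hMV : 2 * M ≤ V := by rw [hM]; linarith only [hO'V]
  have hcbd : ∀ᵐ x ∂(volume.restrict II), |f x - c| ≤ M := by
    filter_upwards [h1, h2] with x ha hb
    rw [abs_le]
    constructor
    · rw [hcdef, hM]; linarith only [hb]
    · rw [hcdef, hM]; linarith only [ha]
  -- indicator versions
  set h' : ℝ → ℝ := II.indicator (fun y => f y - c) with hh'def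
  set f' : ℝ → ℝ := II.indicator f with hf'def
  have hh'bd : ∀ᵐ x : ℝ, |h' x| ≤ M := by
    filter_upwards [(ae_restrict_iff' BVAux.measII).mp hcbd] with x hx
    by_cases hxII : x ∈ II
    · rw [hh'def]; rw [Set.indicator_of_mem hxII]; exact hx hxII
    · rw [hh'def, Set.indicator_of_notMem hxII]; simpa using hM0
  have hf'bd : ∀ᵐ x : ℝ, |f' x| ≤ N := by
    filter_upwards [(ae_restrict_iff' BVAux.measII).mp hfN] with x hx
    by_cases hxII : x ∈ II
    · rw [hf'def]; rw [Set.indicator_of_mem hxII]; exact hx hxII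
    · rw [hf'def, Set.indicator_of_notMem hxII]; simpa using hN0
  have hh'int : Integrable h' volume := by
    rw [hh'def, integrable_indicator_iff BVAux.measII]
    exact hfint.sub (integrable_const c)
  have hf'int : Integrable f' volume := by
    rw [hf'def, integrable_indicator_iff BVAux.measII]
    exact hfint
  -- choice of ε
  set s : ℝ := Real.sqrt (Φ n) with hs
  have hs0 : 0 < s := Real.sqrt_pos.mpr hΦ0
  have hs1 : s ≤ 1 := by
    rw [hs, show (1:ℝ) = Real.sqrt 1 by rw [Real.sqrt_one]]
    exact Real.sqrt_le_sqrt hΦ1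
  have hsq : s^2 = Φ n := Real.sq_sqrt hΦ0.le
  set ε : ℝ := s ^ (α⁻¹) with hεdef
  have hε0 : 0 < ε := Real.rpow_pos_of_pos hs0 _
  have hε1 : ε ≤ 1 := Real.rpow_le_one hs0.le hs1 (by positivity)
  have hεα : ε ^ α = s := by
    rw [hεdef, ← Real.rpow_mul hs0.le, inv_mul_cancel₀ hα0.ne', Real.rpow_one]
  -- the mollified function F
  set F : ℝ → ℝ := fun x =>
    (∫ y in Ioo (BVAux.aa ε (BVAux.cl x)) (BVAux.bb ε (BVAux.cl x)), f y)
      / BVAux.LL ε (BVAux.cl x) with hFdef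
  have hLLpos : ∀ u : ℝ, u ∈ II → 0 < BVAux.LL ε u :=
    fun u hu => lt_of_lt_of_le hε0 (BVAux.LL_ge hε0 hε1 hu)
  have hsplitf : ∀ u : ℝ, u ∈ II → (∫ y in Ioo (BVAux.aa ε u) (BVAux.bb ε u), f y)
      = (∫ y in Ioo (BVAux.aa ε u) (BVAux.bb ε u), h' y) + c * BVAux.LL ε u := by
    intro u hu
    have hIoosub := BVAux.Ioo_sub_II ε u
    have e1 : (∫ y in Ioo (BVAux.aa ε u) (BVAux.bb ε u), f y)
        = ∫ y in Ioo (BVAux.aa ε u) (BVAux.bb ε u), (h' y + c) := by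
      refine setIntegral_congr_fun measurableSet_Ioo (fun y hy => ?_)
      rw [hh'def, Set.indicator_of_mem (hIoosub hy)]
      ring
    rw [e1, integral_add hh'int.integrableOn (integrable_const c), setIntegral_const,
      measureReal_def, BVAux.vol_Ioo, ENNReal.toReal_ofReal (hLLpos u hu).le, smul_eq_mul]
    ring
  have hFc : ∀ x : ℝ, F x =
      (∫ y in Ioo (BVAux.aa ε (BVAux.cl x)) (BVAux.bb ε (BVAux.cl x)), h' y)
        / BVAux.LL ε (BVAux.cl x) + c := by
    intro x
    have hu := BVAux.cl_mem x
    have hL := (hLLpos _ hu).ne'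
    rw [hFdef]
    simp only
    rw [hsplitf _ hu, add_div, mul_div_assoc, div_self hL, mul_one]
  have hFf' : ∀ x : ℝ, F x =
      (∫ y in Ioo (BVAux.aa ε (BVAux.cl x)) (BVAux.bb ε (BVAux.cl x)), f' y)
        / BVAux.LL ε (BVAux.cl x) := by
    intro x
    rw [hFdef]
    simp only
    congr 1
    refine setIntegral_congr_fun measurableSet_Ioo (fun y hy => ?_)
    rw [hf'def, Set.indicator_of_mem (BVAux.Ioo_sub_II ε _ hy)]
  have hFN : ∀ x, |F x| ≤ N := by
    intro x
    rw [hFf' x]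
    exact BVAux.fav_bd hf'int hf'bd hε0 hε1 (BVAux.cl_mem x)
  have hFlipcl : ∀ x y : ℝ, |F x - F y| ≤ 4 * M / ε * |BVAux.cl x - BVAux.cl y| := by
    intro x y
    rw [hFc x, hFc y, add_sub_add_right_eq_sub]
    exact BVAux.fav_lip hh'int hh'bd hε0 hε1 (BVAux.cl_mem x) (BVAux.cl_mem y)
  have hF2M : ∀ x y : ℝ, |F x - F y| ≤ 2 * M := by
    intro x y
    rw [hFc x, hFc y, add_sub_add_right_eq_sub]
    have b1 := BVAux.fav_bd hh'int hh'bd hε0 hε1 (BVAux.cl_mem x)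
    have b2 := BVAux.fav_bd hh'int hh'bd hε0 hε1 (BVAux.cl_mem y)
    refine (abs_sub _ _).trans ?_
    linarith only [b1, b2]
  have hFhol : ∀ x y : ℝ, |F x - F y| ≤ (4 * M / ε ^ α) * |x - y| ^ α := by
    intro x y
    exact BVAux.hoelder_conv hα0 hα1 hM0 hε0 (abs_nonneg _)
      (BVAux.cl_lip x y) (hFlipcl x y) (hF2M x y)
  have hFmeas : Measurable F := by
    have hlip : LipschitzWith (Real.toNNReal (4 * M / ε)) F := by
      refine LipschitzWith.of_dist_le_mul fun x y => ?_
      rw [Real.dist_eq, Real.dist_eq, Real.coe_toNNReal _ (by positivity)]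
      exact (hFlipcl x y).trans
        (mul_le_mul_of_nonneg_left (BVAux.cl_lip x y) (by positivity))
    exact hlip.continuous.measurable
  -- error estimate
  have hkey : ∀ᵐ x ∂(volume.restrict II), ENNReal.ofReal |f x - F x| ≤ osc f ε x := by
    refine BVAux.key_ae hf'int hε0 hε1 F (fun x hx => ?_)
    rw [hFdef]
    simp only
    rw [BVAux.cl_eq hx]
  set E : ℝ := ∫ x in II, |f x - F x| with hE
  have hE0 : 0 ≤ E := integral_nonneg fun x => abs_nonneg _
  have herr : E ≤ s * V := by
    have hA : E = (∫⁻ x in II, ENNReal.ofReal |f x - F x|).toReal := by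
      rw [hE, integral_eq_lintegral_of_nonneg_ae (f := fun x => |f x - F x|) (ae_of_all _ fun x => abs_nonneg _)
        ((hf.sub hFmeas).abs.aestronglyMeasurable)]
    have hle1 : (∫⁻ x in II, ENNReal.ofReal |f x - F x|) ≤ osc1 f ε := lintegral_mono_ae hkey
    have hle2 : osc1 f ε ≤ ENNReal.ofReal (ε ^ α) * Var1 α f := BVAux.osc1_le_Var f hε0 hε1
    have htop2 : ENNReal.ofReal (ε ^ α) * Var1 α f ≠ ⊤ :=
      ENNReal.mul_ne_top ENNReal.ofReal_ne_top hVar.ne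
    rw [hA]
    have h8 := ENNReal.toReal_mono htop2 (hle1.trans hle2)
    rwa [ENNReal.toReal_mul, ENNReal.toReal_ofReal (Real.rpow_nonneg hε0.le α), hεα] at h8
  -- integrability for the splitting
  have hGmeas : Measurable fun x => g (T^[n] x) := hg.comp (hT.iterate n)
  have hGbd : ∀ x, |g (T^[n] x)| ≤ Kg := fun x => hgK _
  have hfG : Integrable (fun x => f x * g (T^[n] x)) (volume.restrict II) := by
    have h9 := hfint.bdd_mul hGmeas.aestronglyMeasurable
      (ae_of_all _ fun x => by rw [Real.norm_eq_abs]; exact hGbd x)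
    exact h9.congr (ae_of_all _ fun x => mul_comm _ _)
  have hFint : Integrable F (volume.restrict II) :=
    Integrable.mono' (integrable_const N) hFmeas.aestronglyMeasurable
      (ae_of_all _ fun x => by rw [Real.norm_eq_abs]; exact hFN x)
  have hFG : Integrable (fun x => F x * g (T^[n] x)) (volume.restrict II) := by
    have h9 := hFint.bdd_mul hGmeas.aestronglyMeasurable
      (ae_of_all _ fun x => by rw [Real.norm_eq_abs]; exact hGbd x)
    exact h9.congr (ae_of_all _ fun x => mul_comm _ _)
  have hdiffint : Integrable (fun x => f x - F x) (volume.restrict II) := hfint.sub hFint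
  have hdiffG : Integrable (fun x => (f x - F x) * g (T^[n] x)) (volume.restrict II) := by
    have h9 := hdiffint.bdd_mul hGmeas.aestronglyMeasurable
      (ae_of_all _ fun x => by rw [Real.norm_eq_abs]; exact hGbd x)
    exact h9.congr (ae_of_all _ fun x => mul_comm _ _)
  -- splitting identities
  have hsplit1 : (∫ x in II, f x * g (T^[n] x))
      = (∫ x in II, F x * g (T^[n] x)) + ∫ x in II, (f x - F x) * g (T^[n] x) := by
    rw [← integral_add hFG hdiffG]
    exact integral_congr_ae (ae_of_all _ fun x => by ring)
  have hsplit2 : (∫ x in II, f x) = (∫ x in II, F x) + ∫ x in II, (f x - F x) := by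
    rw [← integral_add hFint hdiffint]
    exact integral_congr_ae (ae_of_all _ fun x => by ring)
  -- bounds on error integrals
  have hb1 : |∫ x in II, (f x - F x) * g (T^[n] x)| ≤ Kg * E := by
    have step1 : |∫ x in II, (f x - F x) * g (T^[n] x)|
        ≤ ∫ x in II, |f x - F x| * |g (T^[n] x)| := by
      simpa using norm_integral_le_integral_norm
        (fun x => (f x - F x) * g (T^[n] x)) (μ := volume.restrict II)
    have step2 : (∫ x in II, |f x - F x| * |g (T^[n] x)|)
        ≤ ∫ x in II, |f x - F x| * Kg := by
      refine integral_mono_ae ?_ (hdiffint.abs.mul_const Kg) (ae_of_all _ fun x => ?_)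
      · exact hdiffG.abs.congr (ae_of_all _ fun x => abs_mul _ _)
      · exact mul_le_mul_of_nonneg_left (hGbd x) (abs_nonneg _)
    have step3 : (∫ x in II, |f x - F x| * Kg) = E * Kg := by
      rw [integral_mul_const]
    have : |∫ x in II, (f x - F x) * g (T^[n] x)| ≤ E * Kg := by
      rw [← step3]; exact step1.trans step2
    linarith only [this]
  have hb2 : |∫ x in II, (f x - F x)| ≤ E := by
    have h12 := norm_integral_le_integral_norm (fun x => f x - F x) (μ := volume.restrict II)
    rw [hE]
    simpa using h12
  have hIgbd : |∫ x, g x ∂μ| ≤ Kg := by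
    have hgint : Integrable g μ :=
      Integrable.mono' (integrable_const Kg) hg.aestronglyMeasurable
        (ae_of_all _ fun x => by rw [Real.norm_eq_abs]; exact hgK x)
    calc |∫ x, g x ∂μ| ≤ ∫ x, |g x| ∂μ := by
          simpa using norm_integral_le_integral_norm g (μ := μ)
      _ ≤ ∫ _x, Kg ∂μ := integral_mono_ae hgint.abs (integrable_const _) (ae_of_all _ hgK)
      _ = Kg := by rw [integral_const, measureReal_def, measure_univ, ENNReal.toReal_one, one_smul]
  -- splitting of Conv
  have hconv_split : Conv T μ n f g ≤ Conv T μ n F g + 2 * Kg * E := by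
    simp only [Conv]
    rw [hsplit1, hsplit2]
    have e2 : (∫ x in II, F x * g (T^[n] x)) + (∫ x in II, (f x - F x) * g (T^[n] x))
        - (∫ x, g x ∂μ) * ((∫ x in II, F x) + ∫ x in II, (f x - F x))
        = ((∫ x in II, F x * g (T^[n] x)) - (∫ x, g x ∂μ) * (∫ x in II, F x))
          + ((∫ x in II, (f x - F x) * g (T^[n] x))
            - (∫ x, g x ∂μ) * (∫ x in II, (f x - F x))) := by ring
    rw [e2]
    refine (abs_add_le _ _).trans ?_
    have h10 : |(∫ x in II, (f x - F x) * g (T^[n] x))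
        - (∫ x, g x ∂μ) * (∫ x in II, (f x - F x))| ≤ 2 * Kg * E := by
      refine (abs_sub _ _).trans ?_
      have h11 : |(∫ x, g x ∂μ) * (∫ x in II, (f x - F x))| ≤ Kg * E := by
        rw [abs_mul]
        exact mul_le_mul hIgbd hb2 (abs_nonneg _) hKg0
      linarith only [h11, hb1]
    linarith only [h10]
  -- apply the hypothesis to F
  have hhyp := hyp F g (4 * M / ε ^ α) N Kg hFhol hFN hg hgK n hn
  rw [hεα] at hhyp
  -- final arithmetic
  have hfinal : Kg * (N + 4 * M / s) * Φ n + 2 * Kg * (s * V) ≤ 6 * Kg * N * s := by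
    rw [← hsq]
    have hexp : Kg * (N + 4 * M / s) * s ^ 2 = Kg * N * s^2 + 4 * Kg * M * s := by
      field_simp
    rw [hexp]
    have hss : s^2 ≤ s := by
      calc s^2 = s * s := sq s
        _ ≤ 1 * s := mul_le_mul_of_nonneg_right hs1 hs0.le
        _ = s := one_mul s
    have t1 : Kg * N * s^2 ≤ Kg * N * s := by
      have h13 := mul_le_mul_of_nonneg_left hss (mul_nonneg hKg0 hN0)
      nlinarith only [h13]
    have t2 : 4 * Kg * M * s ≤ 2 * Kg * V * s := by
      have h13 := mul_le_mul_of_nonneg_left hMV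
        (mul_nonneg (mul_nonneg (by norm_num : (0:ℝ) ≤ 2) hKg0) hs0.le)
      nlinarith only [h13]
    have t3 : 2 * Kg * (s * V) ≤ 2 * Kg * (s * N) := by
      have h13 := mul_le_mul_of_nonneg_left hVN
        (mul_nonneg (mul_nonneg (by norm_num : (0:ℝ) ≤ 2) hKg0) hs0.le)
      nlinarith only [h13]
    have t4 : 2 * Kg * V * s ≤ 2 * Kg * N * s := by
      have h13 := mul_le_mul_of_nonneg_left hVN
        (mul_nonneg (mul_nonneg (by norm_num : (0:ℝ) ≤ 2) hKg0) hs0.le)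
      nlinarith only [h13]
    have t5 : 0 ≤ Kg * N * s := by positivity
    nlinarith only [t1, t2, t3, t4, t5]
  calc Conv T μ n f g ≤ Conv T μ n F g + 2 * Kg * E := hconv_split
    _ ≤ Kg * (N + 4 * M / s) * Φ n + 2 * Kg * (s * V) := by
        refine add_le_add hhyp ?_
        have : 2 * Kg * E ≤ 2 * Kg * (s * V) :=
          mul_le_mul_of_nonneg_left herr (by positivity)
        exact this
    _ ≤ 6 * Kg * N * s := hfinal
end
end

section
/- Let T : I → I be Borel measurable (I = [0,1]), let m be Lebesgue measure on I, let μ be a Borel probability measure on I, fix α ∈ (0,1] and a function Φ : ℕ → (0,∞). Assume that for every α-Hölder function f : I → ℝ, every bounded measurable g : I → ℝ and every n ≥ 1 one has Conv_n(f,g) ≤ ‖g‖_∞ · ‖f‖_{H(α)} · Φ(n). Then for every f ∈ BV_{1,α}, every bounded measurable g, every n ≥ 1 and every ε ∈ (0,1], Conv_n(f,g) ≤ ‖g‖_∞ · ‖f‖_{1,α} · ( 2 ε^α + 4 ε^{−α} Φ(n) ). -/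
open MeasureTheory Set Filter Metric
open scoped ENNReal

noncomputable section

lemma meas_II : MeasurableSet II := measurableSet_Icc

lemma vol_II : volume II = 1 := by simp [II]

lemma meas_A (x ε : ℝ) : MeasurableSet (Metric.ball x ε ∩ II) :=
  measurableSet_ball.inter meas_II

/-- restriction to ball x 1 ∩ II equals restriction to II for x ∈ II -/
lemma restrict_ball_one (x : ℝ) (hx : x ∈ II) :
    volume.restrict (Metric.ball x 1 ∩ II) = volume.restrict II := by
  apply Measure.restrict_congr_set
  rw [MeasureTheory.ae_eq_set]
  constructor
  · simp [diff_eq_empty.2 inter_subset_right]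
  · refine measure_mono_null (fun v hv => ?_) ((Set.countable_insert.2 (Set.countable_singleton 1)).measure_zero _ : volume ({0,1} : Set ℝ) = 0)
    obtain ⟨⟨hv0, hv1⟩, hv2⟩ := hv
    obtain ⟨hx0, hx1⟩ := hx
    have hnb : v ∉ Metric.ball x 1 := fun h => hv2 ⟨h, hv0, hv1⟩
    rw [Metric.mem_ball, Real.dist_eq, not_lt] at hnb
    rcases abs_cases (v - x) with ⟨he, _⟩ | ⟨he, _⟩ <;>
      simp only [mem_insert_iff, mem_singleton_iff] <;> [right; left] <;> linarith

/-- the global essential oscillation -/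
def OscE (f : ℝ → ℝ) : ℝ≥0∞ :=
  essSup (fun p : ℝ × ℝ => ENNReal.ofReal |f p.1 - f p.2|)
    ((volume.restrict II).prod (volume.restrict II))

lemma osc_one_eq (f : ℝ → ℝ) (x : ℝ) (hx : x ∈ II) : osc f 1 x = OscE f := by
  rw [osc, OscE, restrict_ball_one x hx]

lemma OscE_le_Var1 (f : ℝ → ℝ) (α : ℝ) (hα : α ∈ Set.Ioc (0:ℝ) 1) :
    OscE f ≤ Var1 α f := by
  have h1 : osc1 f 1 = OscE f := by
    rw [osc1]
    rw [setLIntegral_congr_fun meas_II (fun x hx => osc_one_eq f x hx)]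
    simp [vol_II]
  have := le_biSup (f := fun ε => ENNReal.ofReal (ε ^ (-α)) * osc1 f ε)
      (show (1:ℝ) ∈ Set.Ioc (0:ℝ) 1 by norm_num)
  simpa [h1, Real.one_rpow, Var1] using this

/-- the bad set for the lower essential value property -/
def Blow (f : ℝ → ℝ) (ε : ℝ) (q : ℚ) : Set ℝ :=
  {x | x ∈ II ∧ f x < q ∧ volume ({u | f u < q} ∩ (Metric.ball x ε ∩ II)) = 0}

lemma Blow_null (f : ℝ → ℝ) (ε : ℝ) (hε : 0 < ε) (q : ℚ) : volume (Blow f ε q) = 0 := by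
  have hcov : Blow f ε q ⊆ ⋃ c : ℚ, Blow f ε q ∩ Metric.ball (c:ℝ) (ε/2) := by
    intro x hx
    obtain ⟨c, hc⟩ := exists_rat_near x (show (0:ℝ) < ε/2 by linarith)
    exact Set.mem_iUnion.2 ⟨c, hx, by simpa [Metric.mem_ball, Real.dist_eq] using hc⟩
  refine measure_mono_null hcov (measure_iUnion_null fun c => ?_)
  rcases Set.eq_empty_or_nonempty (Blow f ε q ∩ Metric.ball (c:ℝ) (ε/2)) with h | ⟨x₀, hx₀⟩
  · rw [h]; exact measure_empty
  · refine measure_mono_null (fun y hy => ?_) hx₀.1.2.2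
    obtain ⟨⟨hyII, hyq, _⟩, hyc⟩ := hy
    refine ⟨hyq, ?_, hyII⟩
    rw [Metric.mem_ball, Real.dist_eq]
    rw [Metric.mem_ball, Real.dist_eq] at hyc
    have h2 := hx₀.2
    rw [Metric.mem_ball, Real.dist_eq] at h2
    have := abs_sub_abs_le_abs_sub (y - (c:ℝ)) (x₀ - (c:ℝ))
    calc |y - x₀| = |(y - (c:ℝ)) - (x₀ - (c:ℝ))| := by ring_nf
    _ ≤ |y - (c:ℝ)| + |x₀ - (c:ℝ)| := abs_sub _ _
    _ < ε := by linarith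

/-- key lemma: if near x there is positive measure where f exceeds f x + t,
and x is a good point, then the oscillation exceeds t. -/
lemma key_osc (f : ℝ → ℝ) (hf : Measurable f) (ε t : ℝ) (hε : 0 < ε) (ht : 0 ≤ t) (x : ℝ)
    (hgood : ∀ q : ℚ, f x < q → volume ({u | f u < q} ∩ (Metric.ball x ε ∩ II)) ≠ 0)
    (hS : volume ({v | f x + t < f v} ∩ (Metric.ball x ε ∩ II)) ≠ 0) :
    ENNReal.ofReal t < osc f ε x := by
  set A := Metric.ball x ε ∩ II with hA
  have hAm : MeasurableSet A := meas_A x ε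
  -- find a rational threshold q₀
  have hq0 : ∃ q : ℚ, f x + t < q ∧ volume ({v | (q:ℝ) < f v} ∩ A) ≠ 0 := by
    by_contra hcon
    push_neg at hcon
    apply hS
    have hsub : {v | f x + t < f v} ∩ A ⊆ ⋃ q : ℚ,
        {v | f x + t < (q:ℝ) ∧ (q:ℝ) < f v} ∩ A := by
      rintro v ⟨hv, hvA⟩
      obtain ⟨q, hq1, hq2⟩ := exists_rat_btwn (K := ℝ) hv
      exact Set.mem_iUnion.2 ⟨q, ⟨hq1, hq2⟩, hvA⟩
    refine measure_mono_null hsub (measure_iUnion_null fun q => ?_)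
    rcases lt_or_ge (f x + t) (q:ℝ) with h | h
    · refine measure_mono_null (fun v hv => ?_) (hcon q h)
      exact ⟨hv.1.2, hv.2⟩
    · refine measure_mono_null (t := (∅ : Set ℝ)) (fun v hv => absurd hv.1.1 (not_lt.2 h)) measure_empty
  obtain ⟨q₀, hq₀1, hq₀2⟩ := hq0
  obtain ⟨q₁, hq₁1, hq₁2⟩ := exists_rat_btwn (show f x < (q₀:ℝ) - t by linarith)
  have hP := hgood q₁ hq₁1
  -- the two positive-measure sets
  set P := {u | f u < (q₁:ℝ)} ∩ A with hPdef
  set Q := {v | (q₀:ℝ) < f v} ∩ A with hQdef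
  have hPm : MeasurableSet P := (measurableSet_lt hf measurable_const).inter hAm
  have hQm : MeasurableSet Q := (measurableSet_lt measurable_const hf).inter hAm
  by_contra hcon
  push_neg at hcon
  have hae := ae_le_essSup (μ := (volume.restrict A).prod (volume.restrict A))
    (f := fun p : ℝ × ℝ => ENNReal.ofReal |f p.1 - f p.2|)
  rw [← osc] at hae
  have hnull : ((volume.restrict A).prod (volume.restrict A)) (P ×ˢ Q) = 0 := by
    have : P ×ˢ Q ⊆ {p : ℝ × ℝ | ¬ (ENNReal.ofReal |f p.1 - f p.2| ≤ osc f ε x)} := by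
      rintro ⟨u, v⟩ ⟨hu, hv⟩
      simp only [Set.mem_setOf_eq, not_le]
      have h1 : f u < (q₁:ℝ) := hu.1
      have h2 : (q₀:ℝ) < f v := hv.1
      have habs : t < |f u - f v| := by
        rw [abs_sub_comm]
        calc t < (q₀:ℝ) - (q₁:ℝ) := by linarith
        _ ≤ f v - f u := by linarith
        _ ≤ |f v - f u| := le_abs_self _
      calc osc f ε x ≤ ENNReal.ofReal t := hcon
      _ < ENNReal.ofReal |f u - f v| := by
          exact (ENNReal.ofReal_lt_ofReal_iff (lt_of_le_of_lt ht habs)).2 habs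
    exact measure_mono_null this (ae_iff.1 hae)
  rw [Measure.prod_prod, Measure.restrict_apply hPm, Measure.restrict_apply hQm] at hnull
  have hPA : P ∩ A = P := Set.inter_eq_self_of_subset_left Set.inter_subset_right
  have hQA : Q ∩ A = Q := Set.inter_eq_self_of_subset_left Set.inter_subset_right
  rw [hPA, hQA] at hnull
  rcases mul_eq_zero.1 hnull with h | h
  · exact hP h
  · exact hq₀2 h

lemma osc_neg (f : ℝ → ℝ) (ε x : ℝ) : osc (fun v => -(f v)) ε x = osc f ε x := by
  unfold osc
  congr 1
  funext p
  rw [show -f p.1 - -f p.2 = -(f p.1 - f p.2) by ring, abs_neg]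

lemma osc_le_OscE (f : ℝ → ℝ) (ε x : ℝ) (hε : ε ≤ 1) (hx : x ∈ II) :
    osc f ε x ≤ OscE f := by
  rw [← osc_one_eq f x hx]
  unfold osc
  refine essSup_mono_measure ?_
  apply Measure.absolutelyContinuous_of_le
  rw [Measure.prod_restrict, Measure.prod_restrict]
  exact Measure.restrict_mono
    (Set.prod_mono (Set.inter_subset_inter_left _ (Metric.ball_subset_ball hε))
      (Set.inter_subset_inter_left _ (Metric.ball_subset_ball hε))) le_rfl

/-- a.e. point of II is an essential value point for oscillation -/
lemma ae_osc_pt (f : ℝ → ℝ) (hf : Measurable f) (ε : ℝ) (hε : 0 < ε) :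
    ∀ᵐ x ∂(volume.restrict II), ∀ᵐ v ∂(volume.restrict (Metric.ball x ε ∩ II)),
      ENNReal.ofReal |f x - f v| ≤ osc f ε x := by
  have hN : volume ((⋃ q : ℚ, Blow f ε q) ∪ ⋃ q : ℚ, Blow (fun v => -(f v)) ε q) = 0 := by
    refine measure_union_null (measure_iUnion_null fun q => Blow_null _ _ hε q)
      (measure_iUnion_null fun q => Blow_null _ _ hε q)
  have hNae : ∀ᵐ x ∂(volume.restrict II),
      x ∉ ((⋃ q : ℚ, Blow f ε q) ∪ ⋃ q : ℚ, Blow (fun v => -(f v)) ε q) := by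
    exact ae_restrict_of_ae (measure_eq_zero_iff_ae_notMem.1 hN)
  filter_upwards [hNae, ae_restrict_mem meas_II] with x hxN hxII
  -- now prove the inner statement
  rcases eq_or_ne (osc f ε x) ⊤ with htop | htop
  · exact Filter.Eventually.of_forall fun v => htop ▸ le_top
  set t := (osc f ε x).toReal with htdef
  have hosc : osc f ε x = ENNReal.ofReal t := (ENNReal.ofReal_toReal htop).symm
  have ht : 0 ≤ t := ENNReal.toReal_nonneg
  by_contra hcon
  rw [ae_iff] at hcon
  have hsub : {v | ¬ ENNReal.ofReal |f x - f v| ≤ osc f ε x} ⊆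
      {v | f x + t < f v} ∪ {v | f v < f x - t} := by
    intro v hv
    simp only [Set.mem_setOf_eq, not_le, hosc] at hv
    have : t < |f x - f v| := by
      by_contra hle
      exact absurd (ENNReal.ofReal_le_ofReal (not_lt.1 hle)) (not_le.2 hv)
    rcases abs_cases (f x - f v) with ⟨he, _⟩ | ⟨he, _⟩
    · right; simp only [Set.mem_setOf_eq]; linarith
    · left; simp only [Set.mem_setOf_eq]; linarith
  have hpos : volume.restrict (Metric.ball x ε ∩ II) ({v | f x + t < f v} ∪ {v | f v < f x - t}) ≠ 0 :=
    fun h0 => hcon (measure_mono_null hsub h0)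
  have hre : ∀ s : Set ℝ, MeasurableSet s →
      volume.restrict (Metric.ball x ε ∩ II) s = volume (s ∩ (Metric.ball x ε ∩ II)) :=
    fun s hs => Measure.restrict_apply hs
  simp only [Set.mem_union, not_or, Set.mem_iUnion, not_exists] at hxN
  obtain ⟨hxN1, hxN2⟩ := hxN
  have hgood1 : ∀ q : ℚ, f x < q → volume ({u | f u < q} ∩ (Metric.ball x ε ∩ II)) ≠ 0 :=
    fun q hq h0 => hxN1 q ⟨hxII, hq, h0⟩
  have hgood2 : ∀ q : ℚ, -(f x) < q → volume ({u | -(f u) < q} ∩ (Metric.ball x ε ∩ II)) ≠ 0 :=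
    fun q hq h0 => hxN2 q ⟨hxII, hq, h0⟩
  have hcase : volume.restrict (Metric.ball x ε ∩ II) {v | f x + t < f v} ≠ 0 ∨
      volume.restrict (Metric.ball x ε ∩ II) {v | f v < f x - t} ≠ 0 := by
    by_contra hboth
    push_neg at hboth
    exact hpos (measure_union_null hboth.1 hboth.2)
  rcases hcase with hc | hc
  · have := key_osc f hf ε t hε ht x hgood1 (by
      rwa [hre _ (measurableSet_lt measurable_const hf)] at hc)
    rw [hosc] at this; exact lt_irrefl _ this
  · have := key_osc (fun v => -(f v)) hf.neg ε t hε ht x hgood2 (by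
      have hset : {v | -(f x) + t < -(f v)} = {v | f v < f x - t} := by
        ext v; simp only [Set.mem_setOf_eq]; constructor <;> intro <;> linarith
      rw [hset]
      rwa [hre _ (measurableSet_lt hf measurable_const)] at hc)
    rw [osc_neg, hosc] at this; exact lt_irrefl _ this

def Aset (ε x : ℝ) : Set ℝ := Metric.ball x ε ∩ II

def clampI (x : ℝ) : ℝ := max 0 (min 1 x)

def Lf (ε x : ℝ) : ℝ := (volume (Aset ε x)).toReal

def moll (f : ℝ → ℝ) (ε x : ℝ) : ℝ := (∫ v in Aset ε (clampI x), f v) / Lf ε (clampI x)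

lemma clamp_mem (x : ℝ) : clampI x ∈ II := by
  constructor
  · exact le_max_left _ _
  · simp only [clampI, max_le_iff]
    exact ⟨zero_le_one, min_le_left _ _⟩

lemma clamp_eq {x : ℝ} (hx : x ∈ II) : clampI x = x := by
  obtain ⟨h0, h1⟩ := hx
  simp [clampI, min_eq_right h1, max_eq_right h0]

lemma clamp_idem (x : ℝ) : clampI (clampI x) = clampI x := clamp_eq (clamp_mem x)

lemma clamp_lip (x y : ℝ) : |clampI x - clampI y| ≤ |x - y| := by
  calc |clampI x - clampI y| ≤ |min 1 x - min 1 y| := by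
        simpa [clampI, max_comm] using abs_max_sub_max_le_abs (min 1 x) (min 1 y) 0
  _ ≤ |x - y| := by
        have := abs_min_sub_min_le_max 1 x 1 y
        simpa using this

lemma clamp_diff_le_one (x y : ℝ) : |clampI x - clampI y| ≤ 1 := by
  obtain ⟨hx0, hx1⟩ := clamp_mem x
  obtain ⟨hy0, hy1⟩ := clamp_mem y
  rw [abs_le]; constructor <;> linarith

lemma Aset_subset (ε x : ℝ) : Aset ε x ⊆ II := Set.inter_subset_right

lemma meas_Aset (ε x : ℝ) : MeasurableSet (Aset ε x) := meas_A x ε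

lemma vol_Aset {ε : ℝ} (hε : 0 < ε) (x : ℝ) :
    volume (Aset ε x) = ENNReal.ofReal (min (x + ε) 1 - max (x - ε) 0) := by
  have h1 : Set.Ioo (max (x - ε) 0) (min (x + ε) 1) ⊆ Aset ε x := by
    intro v ⟨hv1, hv2⟩
    refine ⟨?_, ?_, ?_⟩
    · rw [Metric.mem_ball, Real.dist_eq, abs_lt]
      constructor
      · have := lt_of_le_of_lt (le_max_left (x - ε) 0) hv1; linarith
      · have := lt_of_lt_of_le hv2 (min_le_left _ _); linarith
    · exact le_of_lt (lt_of_le_of_lt (le_max_right _ _) hv1)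
    · exact le_of_lt (lt_of_lt_of_le hv2 (min_le_right _ _))
  have h2 : Aset ε x ⊆ Set.Icc (max (x - ε) 0) (min (x + ε) 1) := by
    intro v ⟨hvb, hv0, hv1⟩
    rw [Metric.mem_ball, Real.dist_eq, abs_lt] at hvb
    constructor
    · rw [max_le_iff]; exact ⟨by linarith [hvb.2], hv0⟩
    · rw [le_min_iff]; exact ⟨by linarith [hvb.1], hv1⟩
  refine le_antisymm ?_ ?_
  · calc volume (Aset ε x) ≤ volume (Set.Icc (max (x - ε) 0) (min (x + ε) 1)) := measure_mono h2
    _ = ENNReal.ofReal (min (x + ε) 1 - max (x - ε) 0) := by rw [Real.volume_Icc]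
  · calc ENNReal.ofReal (min (x + ε) 1 - max (x - ε) 0)
        = volume (Set.Ioo (max (x - ε) 0) (min (x + ε) 1)) := by rw [Real.volume_Ioo]
    _ ≤ volume (Aset ε x) := measure_mono h1

lemma Lf_bounds {ε : ℝ} (hε : 0 < ε) (hε1 : ε ≤ 1) {x : ℝ} (hx : x ∈ II) :
    ε ≤ Lf ε x ∧ Lf ε x ≤ 2 * ε := by
  obtain ⟨hx0, hx1⟩ := hx
  have hδ : ε ≤ min (x + ε) 1 - max (x - ε) 0 ∧ min (x + ε) 1 - max (x - ε) 0 ≤ 2 * ε := by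
    rcases min_cases (x + ε) 1 with ⟨hm, hm'⟩ | ⟨hm, hm'⟩ <;>
      rcases max_cases (x - ε) 0 with ⟨hM, hM'⟩ | ⟨hM, hM'⟩ <;>
      rw [hm, hM] <;> constructor <;> linarith
  rw [Lf, vol_Aset hε, ENNReal.toReal_ofReal (by linarith [hδ.1])]
  exact hδ

lemma Lf_pos {ε : ℝ} (hε : 0 < ε) (hε1 : ε ≤ 1) {x : ℝ} (hx : x ∈ II) : 0 < Lf ε x :=
  lt_of_lt_of_le hε (Lf_bounds hε hε1 hx).1

/-- integral bound over a subset of II from an a.e. bound on II -/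
lemma setInt_bound (h : ℝ → ℝ) (s : Set ℝ) (hs : s ⊆ II) (C : ℝ)
    (hae : ∀ᵐ u ∂(volume.restrict II), |h u| ≤ C) :
    |∫ u in s, h u| ≤ C * (volume s).toReal := by
  haveI : IsFiniteMeasure (volume.restrict s) := ⟨by
    rw [Measure.restrict_apply_univ]
    exact lt_of_le_of_lt (measure_mono hs) (by rw [vol_II]; exact ENNReal.one_lt_top)⟩
  have h1 : volume.restrict s = (volume.restrict II).restrict s :=
    (Measure.restrict_restrict_of_subset hs).symm
  have h2 : ∀ᵐ u ∂(volume.restrict s), ‖h u‖ ≤ C := by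
    rw [h1]
    exact ae_restrict_of_ae (by simpa [Real.norm_eq_abs] using hae)
  have := norm_integral_le_of_norm_le_const (μ := volume.restrict s) h2
  rwa [measureReal_restrict_apply_univ, Real.norm_eq_abs] at this

lemma vol_ball_diff {ε : ℝ} (a b : ℝ) :
    volume (Metric.ball a ε \ Metric.ball b ε) ≤ ENNReal.ofReal |a - b| := by
  rcases le_total a b with h | h
  · have hsub : Metric.ball a ε \ Metric.ball b ε ⊆ Set.Ioc (a - ε) (b - ε) := by
      intro v ⟨hv1, hv2⟩
      rw [Metric.mem_ball, Real.dist_eq, abs_lt] at hv1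
      rw [Metric.mem_ball, Real.dist_eq, not_lt, le_abs] at hv2
      constructor
      · linarith [hv1.1]
      · rcases hv2 with h' | h' <;> linarith [hv1.2]
    calc volume (Metric.ball a ε \ Metric.ball b ε) ≤ volume (Set.Ioc (a - ε) (b - ε)) :=
        measure_mono hsub
    _ = ENNReal.ofReal (b - ε - (a - ε)) := Real.volume_Ioc
    _ ≤ ENNReal.ofReal |a - b| := by
        apply ENNReal.ofReal_le_ofReal
        rw [abs_sub_comm]
        calc b - ε - (a - ε) = b - a := by ring
        _ ≤ |b - a| := le_abs_self _
  · have hsub : Metric.ball a ε \ Metric.ball b ε ⊆ Set.Ico (b + ε) (a + ε) := by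
      intro v ⟨hv1, hv2⟩
      rw [Metric.mem_ball, Real.dist_eq, abs_lt] at hv1
      rw [Metric.mem_ball, Real.dist_eq, not_lt, le_abs] at hv2
      constructor
      · rcases hv2 with h' | h' <;> linarith [hv1.1]
      · linarith [hv1.2]
    calc volume (Metric.ball a ε \ Metric.ball b ε) ≤ volume (Set.Ico (b + ε) (a + ε)) :=
        measure_mono hsub
    _ = ENNReal.ofReal (a + ε - (b + ε)) := Real.volume_Ico
    _ ≤ ENNReal.ofReal |a - b| := by
        apply ENNReal.ofReal_le_ofReal
        calc a + ε - (b + ε) = a - b := by ring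
        _ ≤ |a - b| := le_abs_self _

lemma abs_int_le (h : ℝ → ℝ) (m : Measure ℝ) : |∫ x, h x ∂m| ≤ ∫ x, |h x| ∂m := by
  simpa [Real.norm_eq_abs] using norm_integral_le_integral_norm (μ := m) h



/-- If convergence to equilibrium holds with speed `Φ` for `α`-Hölder `f` against bounded
measurable `g`, then for `f ∈ BV_{1,α}`, bounded measurable `g`, `n ≥ 1` and `ε ∈ (0,1]`,
`Conv_n(f,g) ≤ ‖g‖_∞ ‖f‖_{1,α} (2 ε^α + 4 ε^{−α} Φ(n))`. -/
theorem holder_to_bounded_variation_convergence_eps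
    (T : ℝ → ℝ) (hT : Measurable T) (hTI : Set.MapsTo T II II)
    (μ : Measure ℝ) [IsProbabilityMeasure μ] (hμI : μ II = 1)
    (α : ℝ) (hα : α ∈ Set.Ioc (0 : ℝ) 1)
    (Φ : ℕ → ℝ) (hΦ : ∀ n, 0 < Φ n)
    (hyp : ∀ (f g : ℝ → ℝ) (Hf Kf Kg : ℝ),
      (∀ x y, |f x - f y| ≤ Hf * |x - y| ^ α) →
      (∀ x, |f x| ≤ Kf) →
      Measurable g → (∀ x, |g x| ≤ Kg) →
      ∀ n : ℕ, 1 ≤ n → Conv T μ n f g ≤ Kg * (Kf + Hf) * Φ n) :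
    ∀ (f g : ℝ → ℝ) (Kg : ℝ),
      Measurable f → Var1 α f < ⊤ →
      Measurable g → (∀ x, |g x| ≤ Kg) →
      ∀ n : ℕ, 1 ≤ n → ∀ ε ∈ Set.Ioc (0 : ℝ) 1,
        Conv T μ n f g ≤ Kg * norm1r α f * (2 * ε ^ α + 4 * ε ^ (-α) * Φ n) := by
  intro f g Kg hfm hVar hgm hgK n hn ε hεmem
  obtain ⟨hε0, hε1⟩ := hεmem
  obtain ⟨hα0, hα1⟩ := hα
  have hKg0 : 0 ≤ Kg := le_trans (abs_nonneg _) (hgK 0)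
  have hΦpos := hΦ n
  set ν := volume.restrict II with hνdef
  have hprob : ν Set.univ = 1 := by rw [hνdef, Measure.restrict_apply_univ, vol_II]
  haveI hfin : IsFiniteMeasure ν := ⟨by rw [hprob]; exact ENNReal.one_lt_top⟩
  -- oscillation facts
  have hOle : OscE f ≤ Var1 α f := OscE_le_Var1 f α ⟨hα0, hα1⟩
  set R := (OscE f).toReal with hRdef
  have hOtop : OscE f ≠ ⊤ := (lt_of_le_of_lt hOle hVar).ne
  have hOE : OscE f = ENNReal.ofReal R := (ENNReal.ofReal_toReal hOtop).symm
  have hR0 : 0 ≤ R := ENNReal.toReal_nonneg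
  set V := (Var1 α f).toReal with hVdef
  have hRV : R ≤ V := ENNReal.toReal_mono hVar.ne hOle
  have hV0 : 0 ≤ V := ENNReal.toReal_nonneg
  -- rpow facts
  have hεα_pos : (0:ℝ) < ε ^ α := Real.rpow_pos_of_pos hε0 α
  have hεα_le1 : ε ^ α ≤ 1 := Real.rpow_le_one hε0.le hε1 hα0.le
  have hεnegα_pos : (0:ℝ) < ε ^ (-α) := Real.rpow_pos_of_pos hε0 _
  have hεnegα_ge1 : (1:ℝ) ≤ ε ^ (-α) := by
    rw [Real.rpow_neg hε0.le]
    exact (one_le_inv₀ hεα_pos).2 hεα_le1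
  -- pair bound
  have hF3 : ∀ᵐ p ∂(ν.prod ν), |f p.1 - f p.2| ≤ R := by
    have h := ae_le_essSup (μ := ν.prod ν)
      (f := fun p : ℝ × ℝ => ENNReal.ofReal |f p.1 - f p.2|)
    filter_upwards [h] with p hp
    rw [show essSup (fun p : ℝ × ℝ => ENNReal.ofReal |f p.1 - f p.2|) (ν.prod ν) = OscE f
      from rfl, hOE] at hp
    exact (ENNReal.ofReal_le_ofReal_iff hR0).1 hp
  have hF4 : ∀ᵐ u ∂ν, ∀ᵐ v ∂ν, |f u - f v| ≤ R := Measure.ae_ae_of_ae_prod hF3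
  -- a constant near f
  obtain ⟨c, hc⟩ : ∃ c : ℝ, ∀ᵐ v ∂ν, |c - f v| ≤ R := by
    have hνne : ν ≠ 0 := by
      intro h0; rw [h0] at hprob; simp at hprob
    haveI := ae_neBot.2 hνne
    obtain ⟨u, hu⟩ := hF4.exists
    exact ⟨f u, hu⟩
  -- integrability of f on II
  have hfint : IntegrableOn f II := by
    refine Integrable.mono' (integrable_const (|c| + R)) hfm.aestronglyMeasurable ?_
    filter_upwards [hc] with v hv
    rw [Real.norm_eq_abs]
    calc |f v| = |c - (c - f v)| := by ring_nf
    _ ≤ |c| + |c - f v| := abs_sub _ _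
    _ ≤ |c| + R := by linarith
  set Ifl := ∫ v in II, |f v| with hIfldef
  have hIfl0 : 0 ≤ Ifl := integral_nonneg fun v => abs_nonneg _
  have hcb : |c| ≤ Ifl + R := by
    have h1 : ‖∫ v in II, (c - f v)‖ ≤ R * (ν Set.univ).toReal :=
      norm_integral_le_of_norm_le_const (μ := ν)
        (by filter_upwards [hc] with v hv; rwa [Real.norm_eq_abs])
    rw [hprob, ENNReal.toReal_one, mul_one, Real.norm_eq_abs] at h1
    have h2 : ∫ v in II, (c - f v) = c - ∫ v in II, f v := by
      rw [integral_sub (integrable_const c) hfint, setIntegral_const, Measure.real, vol_II]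
      simp
    have h3 : |∫ v in II, f v| ≤ Ifl := by
      rw [hIfldef]
      exact abs_int_le f ν
    rw [h2] at h1
    calc |c| = |(c - ∫ v in II, f v) + ∫ v in II, f v| := by ring_nf
    _ ≤ |c - ∫ v in II, f v| + |∫ v in II, f v| := abs_add_le _ _
    _ ≤ R + Ifl := add_le_add h1 h3
    _ = Ifl + R := by ring
  -- mollification
  have hLl : ∀ {y : ℝ}, y ∈ II → ε ≤ Lf ε y := fun hy => (Lf_bounds hε0 hε1 hy).1
  have hLpos : ∀ {y : ℝ}, y ∈ II → 0 < Lf ε y := fun hy => Lf_pos hε0 hε1 hy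
  set φ := moll f ε with hφdef
  have hφeq : ∀ y ∈ II, φ y = (∫ v in Aset ε y, f v) / Lf ε y := by
    intro y hy; rw [hφdef, moll, clamp_eq hy]
  have hφclamp : ∀ x, φ x = φ (clampI x) := by
    intro x; rw [hφdef]; show moll f ε x = moll f ε (clampI x); rw [moll, moll, clamp_idem]
  have hfintA : ∀ s : Set ℝ, s ⊆ II → IntegrableOn f s := fun s hs => hfint.mono_set hs
  -- core averaging bound
  have hcore : ∀ (y : ℝ), y ∈ II → ∀ (b C : ℝ),
      (∀ᵐ u ∂(volume.restrict (Aset ε y)), |b - f u| ≤ C) → |b - φ y| ≤ C := by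
    intro y hy b C hae
    haveI : IsFiniteMeasure (volume.restrict (Aset ε y)) := ⟨by
      rw [Measure.restrict_apply_univ, vol_Aset hε0]; exact ENNReal.ofReal_lt_top⟩
    have hint1 : ∫ u in Aset ε y, (b - f u) = b * Lf ε y - ∫ u in Aset ε y, f u := by
      rw [integral_sub (integrable_const b) (hfintA _ (Aset_subset ε y)), setIntegral_const,
        smul_eq_mul]
      rw [show volume.real (Aset ε y) = Lf ε y from rfl]
      ring
    have hb : |∫ u in Aset ε y, (b - f u)| ≤ C * Lf ε y := by
      have h2 := norm_integral_le_of_norm_le_const (μ := volume.restrict (Aset ε y))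
        (C := C) (by filter_upwards [hae] with u hu; rwa [Real.norm_eq_abs])
      rw [measureReal_restrict_apply_univ, Real.norm_eq_abs] at h2
      rwa [show volume.real (Aset ε y) = Lf ε y from rfl] at h2
    have hL := hLpos hy
    have heq : b - φ y = (∫ u in Aset ε y, (b - f u)) / Lf ε y := by
      rw [hint1, hφeq y hy]
      field_simp
    rw [heq, abs_div, abs_of_pos hL, div_le_iff₀ hL]
    linarith [hb]
  have hphiC : ∀ (b C : ℝ), (∀ᵐ u ∂ν, |b - f u| ≤ C) → ∀ x, |b - φ x| ≤ C := by
    intro b C hae x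
    rw [hφclamp x]
    refine hcore (clampI x) (clamp_mem x) b C ?_
    rw [show volume.restrict (Aset ε (clampI x)) = ν.restrict (Aset ε (clampI x)) from
      (Measure.restrict_restrict_of_subset (Aset_subset _ _)).symm]
    exact ae_restrict_of_ae hae
  have hφc : ∀ x, |c - φ x| ≤ R := hphiC c R hc
  have hKφ : ∀ x, |φ x| ≤ Ifl + 2 * R := by
    intro x
    calc |φ x| = |c - (c - φ x)| := by ring_nf
    _ ≤ |c| + |c - φ x| := abs_sub _ _
    _ ≤ (Ifl + R) + R := add_le_add hcb (hφc x)
    _ = Ifl + 2 * R := by ring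
  have hfφ : ∀ y : ℝ, ∀ᵐ u ∂ν, |f u - φ y| ≤ R := by
    intro y
    filter_upwards [hF4] with u hu
    exact hphiC (f u) R hu y
  -- Lipschitz estimate
  have hlip : ∀ x y, x ∈ II → y ∈ II → |φ x - φ y| ≤ (2 * R / ε) * |x - y| := by
    intro x y hx hy
    set h := fun u => f u - φ y with hhdef
    have hintII : IntegrableOn h II :=
      hfint.sub (integrableOn_const (by rw [vol_II]; exact ENNReal.one_ne_top))
    have hA0 : ∫ u in Aset ε y, h u = 0 := by
      simp only [hhdef]
      rw [integral_sub (hfintA _ (Aset_subset ε y)) (integrableOn_const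
          (by rw [vol_Aset hε0]; exact ENNReal.ofReal_ne_top)), setIntegral_const,
        smul_eq_mul, show volume.real (Aset ε y) = Lf ε y from rfl, hφeq y hy]
      field_simp
      rw [div_self (hLpos hy).ne', sub_self, mul_zero]
    have hAx : ∫ u in Aset ε x, h u = (φ x - φ y) * Lf ε x := by
      simp only [hhdef]
      rw [integral_sub (hfintA _ (Aset_subset ε x)) (integrableOn_const
          (by rw [vol_Aset hε0]; exact ENNReal.ofReal_ne_top)), setIntegral_const,
        smul_eq_mul, show volume.real (Aset ε x) = Lf ε x from rfl, hφeq x hx]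
      rw [sub_mul, div_mul_cancel₀ _ (hLpos hx).ne']
      ring
    have hdecomp : ∀ a b : ℝ, ∫ u in Aset ε a, h u =
        (∫ u in Aset ε a \ Aset ε b, h u) + ∫ u in Aset ε a ∩ Aset ε b, h u := by
      intro a b
      rw [← setIntegral_union (Set.disjoint_left.2 fun v hv hv2 => hv.2 hv2.2)
        ((meas_Aset ε a).inter (meas_Aset ε b))
        (hintII.mono_set (Set.diff_subset.trans (Aset_subset ε a)))
        (hintII.mono_set (Set.inter_subset_left.trans (Aset_subset ε a)))]
      rw [Set.diff_union_inter]
    have hbound : ∀ a b : ℝ, |∫ u in Aset ε a \ Aset ε b, h u| ≤ R * |a - b| := by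
      intro a b
      refine le_trans (setInt_bound h _ (Set.diff_subset.trans (Aset_subset ε a)) R (hfφ y)) ?_
      have h2 : volume (Aset ε a \ Aset ε b) ≤ ENNReal.ofReal |a - b| := by
        refine le_trans (measure_mono ?_) (vol_ball_diff (ε := ε) a b)
        rintro v ⟨⟨hv1, hv2⟩, hv3⟩
        exact ⟨hv1, fun hb => hv3 ⟨hb, hv2⟩⟩
      exact mul_le_mul_of_nonneg_left (ENNReal.toReal_le_of_le_ofReal (abs_nonneg _) h2) hR0
    have hmain : (φ x - φ y) * Lf ε x =
        (∫ u in Aset ε x \ Aset ε y, h u) - ∫ u in Aset ε y \ Aset ε x, h u := by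
      have d1 := hdecomp x y
      have d2 := hdecomp y x
      rw [hA0] at d2
      rw [hAx] at d1
      rw [Set.inter_comm] at d2
      linarith
    have hkey : |φ x - φ y| * Lf ε x ≤ R * |x - y| + R * |x - y| := by
      rw [← abs_of_pos (hLpos hx), ← abs_mul, hmain]
      calc |(∫ u in Aset ε x \ Aset ε y, h u) - ∫ u in Aset ε y \ Aset ε x, h u|
          ≤ |∫ u in Aset ε x \ Aset ε y, h u| + |∫ u in Aset ε y \ Aset ε x, h u| := abs_sub _ _
      _ ≤ R * |x - y| + R * |y - x| := add_le_add (hbound x y) (hbound y x)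
      _ = R * |x - y| + R * |x - y| := by rw [abs_sub_comm y x]
    rw [div_mul_eq_mul_div, le_div_iff₀ hε0]
    calc |φ x - φ y| * ε ≤ |φ x - φ y| * Lf ε x :=
      mul_le_mul_of_nonneg_left (hLl hx) (abs_nonneg _)
    _ ≤ 2 * R * |x - y| := by linarith
  -- Hoelder estimate
  set Hc := 2 * R * ε ^ (-α) with hHcdef
  have hHc0 : 0 ≤ Hc := by
    rw [hHcdef]
    exact mul_nonneg (by linarith) hεnegα_pos.le
  have hHol : ∀ x y, |φ x - φ y| ≤ Hc * |x - y| ^ α := by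
    intro x y
    set x' := clampI x with hx'def
    set y' := clampI y with hy'def
    have hx' : x' ∈ II := clamp_mem x
    have hy' : y' ∈ II := clamp_mem y
    set d := |x' - y'| with hddef
    have hd0 : (0:ℝ) ≤ d := abs_nonneg _
    have hdxy : d ≤ |x - y| := clamp_lip x y
    have hφxy : |φ x - φ y| = |φ x' - φ y'| := by rw [hφclamp x, hφclamp y]
    have hrpm : d ^ α ≤ |x - y| ^ α := Real.rpow_le_rpow hd0 hdxy hα0.le
    rcases le_or_gt d ε with hcase | hcase
    · have h1 : |φ x' - φ y'| ≤ (2 * R / ε) * d := hlip x' y' hx' hy'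
      have h2 : (2 * R / ε) * d ≤ Hc * d ^ α := by
        rcases eq_or_lt_of_le hd0 with h0 | h0
        · rw [← h0, Real.zero_rpow hα0.ne']
          simp
        · have hda : d = d ^ α * d ^ (1 - α) := by
            rw [← Real.rpow_add h0]
            norm_num
          have hd1α : d ^ (1 - α) ≤ ε ^ (1 - α) := Real.rpow_le_rpow hd0 hcase (by linarith)
          have hεsplit : ε ^ (1 - α) / ε = ε ^ (-α) := by
            rw [div_eq_iff hε0.ne', ← Real.rpow_add_one hε0.ne' (-α), neg_add_eq_sub]
          calc (2 * R / ε) * d = 2 * R * (d ^ α * d ^ (1 - α)) / ε := by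
                rw [← hda]; ring
          _ ≤ 2 * R * (d ^ α * ε ^ (1 - α)) / ε := by
                refine (div_le_div_iff_of_pos_right hε0).2 ?_
                refine mul_le_mul_of_nonneg_left ?_ (by linarith : (0:ℝ) ≤ 2 * R)
                exact mul_le_mul_of_nonneg_left hd1α (Real.rpow_nonneg hd0 α)
          _ = 2 * R * (ε ^ (1 - α) / ε) * d ^ α := by ring
          _ = Hc * d ^ α := by rw [hεsplit, hHcdef]
      calc |φ x - φ y| = |φ x' - φ y'| := hφxy
      _ ≤ (2 * R / ε) * d := h1
      _ ≤ Hc * d ^ α := h2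
      _ ≤ Hc * |x - y| ^ α := mul_le_mul_of_nonneg_left hrpm hHc0
    · have h2R : |φ x' - φ y'| ≤ 2 * R := by
        calc |φ x' - φ y'| = |(c - φ y') - (c - φ x')| := by ring_nf
        _ ≤ |c - φ y'| + |c - φ x'| := abs_sub _ _
        _ ≤ R + R := add_le_add (hφc y') (hφc x')
        _ = 2 * R := by ring
      have hone : 1 ≤ ε ^ (-α) * d ^ α := by
        have hd : ε ≤ d := hcase.le
        have h3 : (1:ℝ) ≤ (d / ε) ^ α := by
          rw [show (1:ℝ) = 1 ^ α from (Real.one_rpow α).symm]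
          exact Real.rpow_le_rpow zero_le_one ((one_le_div hε0).2 hd) hα0.le
        rwa [Real.div_rpow hd0 hε0.le, div_eq_mul_inv, ← Real.rpow_neg hε0.le, mul_comm] at h3
      calc |φ x - φ y| = |φ x' - φ y'| := hφxy
      _ ≤ 2 * R := h2R
      _ ≤ 2 * R * (ε ^ (-α) * d ^ α) := le_mul_of_one_le_right (by linarith) hone
      _ = Hc * d ^ α := by rw [hHcdef]; ring
      _ ≤ Hc * |x - y| ^ α := mul_le_mul_of_nonneg_left hrpm hHc0
  -- continuity of φ
  have hφcont : Continuous φ := by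
    rw [continuous_iff_continuousAt]
    intro x
    rw [ContinuousAt, tendsto_iff_dist_tendsto_zero]
    have h1 : Tendsto (fun y : ℝ => |y - x|) (nhds x) (nhds 0) := by
      have := ((continuous_id.sub (continuous_const (y := x))).abs).tendsto x
      simpa using this
    have h2 : Tendsto (fun y : ℝ => Hc * |y - x| ^ α) (nhds x) (nhds 0) := by
      have h4 : ContinuousAt (fun t : ℝ => t ^ α) 0 :=
        Real.continuousAt_rpow_const 0 α (Or.inr hα0.le)
      have h5 := h4.tendsto
      rw [Real.zero_rpow hα0.ne'] at h5
      have h6 : Tendsto (fun t : ℝ => Hc * t ^ α) (nhds 0) (nhds 0) := by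
        simpa using h5.const_mul Hc
      exact h6.comp h1
    refine squeeze_zero (fun y => dist_nonneg) (fun y => ?_) h2
    rw [Real.dist_eq]
    exact hHol y x
  -- integrability package
  set gT : ℝ → ℝ := fun x => g (T^[n] x) with hgTdef
  have hgTm : Measurable gT := hgm.comp (hT.iterate n)
  have hgTb : ∀ x, |gT x| ≤ Kg := fun x => hgK _
  have hφint : IntegrableOn φ II := hφcont.integrableOn_Icc
  have hmulint : ∀ F : ℝ → ℝ, IntegrableOn F II → IntegrableOn (fun x => F x * gT x) II := by
    intro F hF
    have h1 := hF.bdd_mul hgTm.aestronglyMeasurable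
      (Filter.Eventually.of_forall fun x => by rw [Real.norm_eq_abs]; exact hgTb x)
    exact h1.congr (Filter.Eventually.of_forall fun x => mul_comm _ _)
  -- distance between f and φ in L¹
  set D := ∫ x in II, |f x - φ x| with hDdef
  have hsubint : IntegrableOn (fun x => f x - φ x) II := hfint.sub hφint
  have hsubabs : IntegrableOn (fun x => |f x - φ x|) II := hsubint.abs
  have hD0 : 0 ≤ D := integral_nonneg fun x => abs_nonneg _
  have haept : ∀ᵐ x ∂ν, ENNReal.ofReal |f x - φ x| ≤ osc f ε x := by
    filter_upwards [ae_osc_pt f hfm ε hε0, ae_restrict_mem meas_II] with x hx hxII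
    rcases eq_or_ne (osc f ε x) ⊤ with htop | htop
    · rw [htop]; exact le_top
    set t := (osc f ε x).toReal with htdef
    have hosc : osc f ε x = ENNReal.ofReal t := (ENNReal.ofReal_toReal htop).symm
    have htreal : ∀ᵐ v ∂(volume.restrict (Aset ε x)), |f x - f v| ≤ t := by
      filter_upwards [hx] with v hv
      rw [hosc] at hv
      exact (ENNReal.ofReal_le_ofReal_iff ENNReal.toReal_nonneg).1 hv
    have hb : |f x - φ x| ≤ t := hcore x hxII (f x) t htreal
    rw [hosc]
    exact ENNReal.ofReal_le_ofReal hb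
  have hDV : D ≤ ε ^ α * V := by
    have h1 : ENNReal.ofReal D = ∫⁻ x in II, ENNReal.ofReal |f x - φ x| :=
      ofReal_integral_eq_lintegral_ofReal hsubabs
        (Filter.Eventually.of_forall fun x => abs_nonneg _)
    have h2 : ∫⁻ x in II, ENNReal.ofReal |f x - φ x| ≤ osc1 f ε := lintegral_mono_ae haept
    have h3 : osc1 f ε ≤ ENNReal.ofReal (ε ^ α) * Var1 α f := by
      have h4 := le_biSup (f := fun e : ℝ => ENNReal.ofReal (e ^ (-α)) * osc1 f e)
        (show ε ∈ Set.Ioc (0:ℝ) 1 from ⟨hε0, hε1⟩)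
      calc osc1 f ε = ENNReal.ofReal (ε ^ α) * (ENNReal.ofReal (ε ^ (-α)) * osc1 f ε) := by
            rw [← mul_assoc, ← ENNReal.ofReal_mul hεα_pos.le, ← Real.rpow_add hε0]
            norm_num
      _ ≤ ENNReal.ofReal (ε ^ α) * Var1 α f := mul_le_mul_right h4 _
    have h5 : ENNReal.ofReal D ≤ ENNReal.ofReal (ε ^ α) * Var1 α f := h1 ▸ h2.trans h3
    have h6 : ENNReal.ofReal (ε ^ α) * Var1 α f ≠ ⊤ :=
      ENNReal.mul_ne_top ENNReal.ofReal_ne_top hVar.ne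
    have h7 := ENNReal.toReal_mono h6 h5
    rwa [ENNReal.toReal_ofReal hD0, ENNReal.toReal_mul, ENNReal.toReal_ofReal hεα_pos.le,
      ← hVdef] at h7
  -- bound on ∫ g dμ
  have hMg : |∫ x, g x ∂μ| ≤ Kg := by
    have h1 := norm_integral_le_of_norm_le_const (μ := μ) (f := g) (C := Kg)
      (Filter.Eventually.of_forall fun x => by rw [Real.norm_eq_abs]; exact hgK x)
    rwa [Measure.real, measure_univ, ENNReal.toReal_one, mul_one, Real.norm_eq_abs] at h1
  -- triangle inequality
  have hConvf : Conv T μ n f g =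
      |(∫ x in II, f x * gT x) - (∫ x, g x ∂μ) * ∫ x in II, f x| := by
    simp only [Conv, hgTdef]
  have hConvφ : Conv T μ n φ g =
      |(∫ x in II, φ x * gT x) - (∫ x, g x ∂μ) * ∫ x in II, φ x| := by
    simp only [Conv, hgTdef]
  have htri : Conv T μ n f g ≤ Conv T μ n φ g + 2 * Kg * D := by
    rw [hConvf, hConvφ]
    have hIfg : (∫ x in II, f x * gT x) - ∫ x in II, φ x * gT x
        = ∫ x in II, (f x - φ x) * gT x := by
      rw [← integral_sub (hmulint f hfint) (hmulint φ hφint)]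
      congr 1
      funext x
      ring
    have hIf : (∫ x in II, f x) - ∫ x in II, φ x = ∫ x in II, (f x - φ x) :=
      (integral_sub hfint hφint).symm
    have hb1 : |∫ x in II, (f x - φ x) * gT x| ≤ Kg * D := by
      calc |∫ x in II, (f x - φ x) * gT x| ≤ ∫ x in II, |(f x - φ x) * gT x| :=
          abs_int_le _ _
      _ ≤ ∫ x in II, |f x - φ x| * Kg := by
          refine integral_mono (hmulint _ hsubint).abs (hsubabs.mul_const Kg) ?_
          intro x
          show |(f x - φ x) * gT x| ≤ |f x - φ x| * Kg
          rw [abs_mul]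
          exact mul_le_mul_of_nonneg_left (hgTb x) (abs_nonneg _)
      _ = Kg * D := by rw [integral_mul_const, hDdef, mul_comm]
    have hb2 : |∫ x in II, (f x - φ x)| ≤ D := by
      refine le_trans (abs_int_le _ _) ?_
      rw [hDdef]
    have hkey : (∫ x in II, f x * gT x) - (∫ x, g x ∂μ) * ∫ x in II, f x =
        ((∫ x in II, φ x * gT x) - (∫ x, g x ∂μ) * ∫ x in II, φ x)
        + ((∫ x in II, (f x - φ x) * gT x) - (∫ x, g x ∂μ) * ∫ x in II, (f x - φ x)) := by
      rw [← hIfg, ← hIf]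
      ring
    rw [hkey]
    calc |((∫ x in II, φ x * gT x) - (∫ x, g x ∂μ) * ∫ x in II, φ x)
        + ((∫ x in II, (f x - φ x) * gT x) - (∫ x, g x ∂μ) * ∫ x in II, (f x - φ x))|
        ≤ |(∫ x in II, φ x * gT x) - (∫ x, g x ∂μ) * ∫ x in II, φ x|
          + |(∫ x in II, (f x - φ x) * gT x) - (∫ x, g x ∂μ) * ∫ x in II, (f x - φ x)| :=
        abs_add_le _ _
    _ ≤ |(∫ x in II, φ x * gT x) - (∫ x, g x ∂μ) * ∫ x in II, φ x|
          + (|∫ x in II, (f x - φ x) * gT x| + |(∫ x, g x ∂μ) * ∫ x in II, (f x - φ x)|) := by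
        have := abs_sub (∫ x in II, (f x - φ x) * gT x)
          ((∫ x, g x ∂μ) * ∫ x in II, (f x - φ x))
        linarith
    _ ≤ |(∫ x in II, φ x * gT x) - (∫ x, g x ∂μ) * ∫ x in II, φ x| + (Kg * D + Kg * D) := by
        have h3 : |(∫ x, g x ∂μ) * ∫ x in II, (f x - φ x)| ≤ Kg * D := by
          rw [abs_mul]
          exact mul_le_mul hMg hb2 (abs_nonneg _) hKg0
        linarith
    _ = |(∫ x in II, φ x * gT x) - (∫ x, g x ∂μ) * ∫ x in II, φ x| + 2 * Kg * D := by ring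
  -- apply the hypothesis to φ
  have happ := hyp φ g Hc (Ifl + 2 * R) Kg hHol hKφ hgm hgK n hn
  -- final arithmetic
  have hnorm : norm1r α f = V + Ifl := by
    rw [hVdef, hIfldef]
    rfl
  rw [hnorm]
  have hKH : (Ifl + 2 * R) + Hc ≤ (V + Ifl) * (4 * ε ^ (-α)) := by
    rw [hHcdef]
    have t1 : Ifl ≤ Ifl * ε ^ (-α) := le_mul_of_one_le_right hIfl0 hεnegα_ge1
    have t2 : R ≤ V * ε ^ (-α) := le_trans hRV (le_mul_of_one_le_right hV0 hεnegα_ge1)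
    have t3 : R * ε ^ (-α) ≤ V * ε ^ (-α) := mul_le_mul_of_nonneg_right hRV hεnegα_pos.le
    have t4 : 0 ≤ Ifl * ε ^ (-α) := mul_nonneg hIfl0 hεnegα_pos.le
    have t5 : 0 ≤ V * ε ^ (-α) := mul_nonneg hV0 hεnegα_pos.le
    linarith
  have h2 : Conv T μ n φ g ≤ Kg * ((V + Ifl) * (4 * ε ^ (-α))) * Φ n := by
    refine happ.trans ?_
    have h3 := mul_le_mul_of_nonneg_right (mul_le_mul_of_nonneg_left hKH hKg0) hΦpos.le
    linarith
  calc Conv T μ n f g ≤ Conv T μ n φ g + 2 * Kg * D := htri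
  _ ≤ Kg * ((V + Ifl) * (4 * ε ^ (-α))) * Φ n + 2 * Kg * (ε ^ α * V) := by
      have h3 : 2 * Kg * D ≤ 2 * Kg * (ε ^ α * V) :=
        mul_le_mul_of_nonneg_left hDV (by linarith)
      linarith
  _ ≤ Kg * (V + Ifl) * (2 * ε ^ α + 4 * ε ^ (-α) * Φ n) := by
      have t6 : 0 ≤ Kg * Ifl * ε ^ α := mul_nonneg (mul_nonneg hKg0 hIfl0) hεα_pos.le
      have t7 : 0 ≤ Kg * V := mul_nonneg hKg0 hV0
      have t8 : Kg * V * ε ^ α ≤ Kg * V * ε ^ α := le_rfl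
      linarith
end
end
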